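/- arXiv:2105.04008 — 6 statements merged into one kernel-verified Lean document; each statement's English description precedes it below -/
import Mathlib

section
/- Let G be a countable abelian group, H a Hilbert space, and (x_g)_{g ∈ G} a bounded family in H. Let (Φ_N) be a Følner sequence in G. Then for any finite nonempty subset S ⊂ G, limsup_{N→∞} ‖(1/|Φ_N|) ∑_{g ∈ Φ_N} x_g‖² ≤ limsup_{N→∞} (1/|S|²) ∑_{(h,h') ∈ S×S} (1/|Φ_N|) ∑_{g ∈ Φ_N} Re⟨x_{g+h}, x_{g+h'}⟩. -/
open Filter Finset

def IsFolner {G : Type*} [AddCommGroup G] [DecidableEq G] (Φ : ℕ → Finset G) : Prop :=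
  (∀ N, (Φ N).Nonempty) ∧
  ∀ g : G, Tendsto
    (fun N => ((symmDiff (Φ N) ((Φ N).image (fun x => g + x))).card : ℝ) / (Φ N).card)
    atTop (nhds 0)

lemma aux_sum_sub {G H : Type*} [DecidableEq G] [NormedAddCommGroup H]
    (x : G → H) (C : ℝ) (hC : ∀ g, ‖x g‖ ≤ C) (T T' : Finset G) :
    ‖(∑ g ∈ T, x g) - ∑ g ∈ T', x g‖ ≤ C * (symmDiff T T').card := by
  have e1 : (∑ g ∈ T \ T', x g) + ∑ g ∈ T ∩ T', x g = ∑ g ∈ T, x g := by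
    rw [← Finset.sdiff_inter_self_left T T']
    exact Finset.sum_sdiff Finset.inter_subset_left
  have e2 : (∑ g ∈ T' \ T, x g) + ∑ g ∈ T ∩ T', x g = ∑ g ∈ T', x g := by
    rw [← Finset.sdiff_inter_self_left T' T, Finset.inter_comm]
    exact Finset.sum_sdiff Finset.inter_subset_right
  have e3 : (∑ g ∈ T, x g) - ∑ g ∈ T', x g
      = (∑ g ∈ T \ T', x g) - ∑ g ∈ T' \ T, x g := by
    rw [← e1, ← e2]; abel
  have hcard : ((symmDiff T T').card : ℝ) = (T \ T').card + (T' \ T).card := by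
    rw [symmDiff_def, sup_eq_union, Finset.card_union_of_disjoint disjoint_sdiff_sdiff]
    push_cast; ring
  have b1 : ‖∑ g ∈ T \ T', x g‖ ≤ C * (T \ T').card := by
    calc ‖∑ g ∈ T \ T', x g‖ ≤ ∑ g ∈ T \ T', ‖x g‖ := norm_sum_le _ _
      _ ≤ ∑ _g ∈ T \ T', C := Finset.sum_le_sum (fun g _ => hC g)
      _ = C * (T \ T').card := by rw [Finset.sum_const, nsmul_eq_mul]; ring
  have b2 : ‖∑ g ∈ T' \ T, x g‖ ≤ C * (T' \ T).card := by
    calc ‖∑ g ∈ T' \ T, x g‖ ≤ ∑ g ∈ T' \ T, ‖x g‖ := norm_sum_le _ _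
      _ ≤ ∑ _g ∈ T' \ T, C := Finset.sum_le_sum (fun g _ => hC g)
      _ = C * (T' \ T).card := by rw [Finset.sum_const, nsmul_eq_mul]; ring
  rw [e3, hcard]
  calc ‖(∑ g ∈ T \ T', x g) - ∑ g ∈ T' \ T, x g‖
      ≤ ‖∑ g ∈ T \ T', x g‖ + ‖∑ g ∈ T' \ T, x g‖ := norm_sub_le _ _
    _ ≤ C * (T \ T').card + C * (T' \ T).card := add_le_add b1 b2
    _ = C * ((T \ T').card + (T' \ T).card) := by ring


set_option maxHeartbeats 1000000 in
/-- Finitary van der Corput inequality: for a bounded family `(x_g)` in a Hilbert space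
indexed by a countable abelian group with Følner sequence `(Φ_N)` and any finite nonempty
`S ⊆ G`,
`limsup_N ‖E_{g∈Φ_N} x_g‖² ≤ limsup_N E_{(h,h')∈S²} E_{g∈Φ_N} Re⟨x_{g+h}, x_{g+h'}⟩`. -/
theorem stmt2 {G : Type*} [AddCommGroup G] [Countable G] [DecidableEq G]
    {H : Type*} [NormedAddCommGroup H] [InnerProductSpace ℂ H] [CompleteSpace H]
    (x : G → H) (C : ℝ) (hbdd : ∀ g, ‖x g‖ ≤ C)
    (Φ : ℕ → Finset G) (hΦ : IsFolner Φ)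
    (S : Finset G) (hS : S.Nonempty) :
    limsup (fun N => ‖(((Φ N).card : ℂ))⁻¹ • ∑ g ∈ Φ N, x g‖ ^ 2) atTop ≤
      limsup (fun N => (1 / (S.card : ℝ) ^ 2) * ∑ h ∈ S, ∑ h' ∈ S,
        (∑ g ∈ Φ N, ((inner ℂ (x (g + h)) (x (g + h')) : ℂ)).re) / (Φ N).card) atTop := by
  set C' : ℝ := max C 0 with hC'def
  have hC' : ∀ g, ‖x g‖ ≤ C' := fun g => (hbdd g).trans (le_max_left _ _)
  have hC'0 : 0 ≤ C' := le_max_right _ _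
  have hn : ∀ N, 0 < (Φ N).card := fun N => Finset.card_pos.2 (hΦ.1 N)
  have hnR : ∀ N, (0:ℝ) < ((Φ N).card : ℝ) := fun N => by exact_mod_cast hn N
  have hSc : (0:ℝ) < (S.card : ℝ) := by exact_mod_cast hS.card_pos
  set A : ℕ → H := fun N => (((Φ N).card : ℂ))⁻¹ • ∑ g ∈ Φ N, x g with hA
  set A' : ℕ → G → H := fun N h => (((Φ N).card : ℂ))⁻¹ • ∑ g ∈ Φ N, x (g + h) with hA'
  set b : ℕ → H := fun N => ((S.card : ℂ))⁻¹ • ∑ h ∈ S, A' N h with hb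
  set u : ℕ → ℝ := fun N => ‖A N‖ ^ 2 with hu
  set v : ℕ → ℝ := fun N => (1 / (S.card : ℝ) ^ 2) * ∑ h ∈ S, ∑ h' ∈ S,
      (∑ g ∈ Φ N, ((inner ℂ (x (g + h)) (x (g + h')) : ℂ)).re) / (Φ N).card with hv
  -- norm of complex nat-inverse smul
  have hnorm_smul : ∀ (m : ℕ) (z : H), ‖((m:ℂ))⁻¹ • z‖ = ((m:ℝ))⁻¹ * ‖z‖ := by
    intro m z
    rw [norm_smul, norm_inv, Complex.norm_natCast]
  -- Step 1: ‖A N - A' N h‖ bounded by Folner symmetric difference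
  have step1 : ∀ (h : G) (N : ℕ), ‖A N - A' N h‖ ≤
      C' * (((symmDiff (Φ N) ((Φ N).image (fun y => h + y))).card : ℝ) / (Φ N).card) := by
    intro h N
    have hsum : ∑ g ∈ (Φ N).image (fun y => h + y), x g = ∑ g ∈ Φ N, x (g + h) := by
      rw [Finset.sum_image (fun a _ a' _ hh => by exact add_left_cancel hh)]
      exact Finset.sum_congr rfl (fun g _ => by rw [add_comm])
    have : A N - A' N h = (((Φ N).card : ℂ))⁻¹ •
        ((∑ g ∈ Φ N, x g) - ∑ g ∈ (Φ N).image (fun y => h + y), x g) := by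
      rw [hsum, smul_sub]
    rw [this, hnorm_smul]
    rw [div_eq_inv_mul, ← mul_assoc, mul_comm C' (((Φ N).card:ℝ))⁻¹, mul_assoc]
    exact mul_le_mul_of_nonneg_left (aux_sum_sub x C' hC' _ _) (by positivity)
  -- Step 2: A N - A' N h tends to 0
  have step2 : ∀ h : G, Tendsto (fun N => ‖A N - A' N h‖) atTop (nhds 0) := by
    intro h
    have hlim : Tendsto (fun N =>
        C' * (((symmDiff (Φ N) ((Φ N).image (fun y => h + y))).card : ℝ) / (Φ N).card))
        atTop (nhds 0) := by
      have := (hΦ.2 h).const_mul C'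
      simpa using this
    exact squeeze_zero (fun N => norm_nonneg _) (step1 h) hlim
  -- Step 3: A N - b N tends to 0
  have hScC : ((S.card : ℂ)) ≠ 0 := by exact_mod_cast hS.card_pos.ne'
  have hAb : ∀ N, A N - b N = ((S.card : ℂ))⁻¹ • ∑ h ∈ S, (A N - A' N h) := by
    intro N
    rw [Finset.sum_sub_distrib, smul_sub, hb]
    congr 1
    rw [Finset.sum_const, ← Nat.cast_smul_eq_nsmul ℂ, smul_smul, inv_mul_cancel₀ hScC, one_smul]
  have step3 : Tendsto (fun N => ‖A N - b N‖) atTop (nhds 0) := by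
    have hbound : ∀ N, ‖A N - b N‖ ≤ ((S.card:ℝ))⁻¹ * ∑ h ∈ S, ‖A N - A' N h‖ := by
      intro N
      rw [hAb N, hnorm_smul]
      exact mul_le_mul_of_nonneg_left (norm_sum_le _ _) (by positivity)
    have hlim : Tendsto (fun N => ((S.card:ℝ))⁻¹ * ∑ h ∈ S, ‖A N - A' N h‖) atTop (nhds 0) := by
      have hsum : Tendsto (fun N => ∑ h ∈ S, ‖A N - A' N h‖) atTop (nhds 0) := by
        have := tendsto_finset_sum S (fun h _ => step2 h)
        simpa using this
      simpa using hsum.const_mul ((S.card:ℝ))⁻¹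
    exact squeeze_zero (fun N => norm_nonneg _) hbound hlim
  -- bound on b
  have hA'bound : ∀ N h, ‖A' N h‖ ≤ C' := by
    intro N h
    rw [hA', hnorm_smul]
    calc ((Φ N).card:ℝ)⁻¹ * ‖∑ g ∈ Φ N, x (g + h)‖
        ≤ ((Φ N).card:ℝ)⁻¹ * ∑ g ∈ Φ N, ‖x (g + h)‖ :=
          mul_le_mul_of_nonneg_left (norm_sum_le _ _) (by positivity)
      _ ≤ ((Φ N).card:ℝ)⁻¹ * ∑ _g ∈ Φ N, C' :=
          mul_le_mul_of_nonneg_left (Finset.sum_le_sum (fun g _ => hC' _)) (by positivity)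
      _ = C' := by
          rw [Finset.sum_const, nsmul_eq_mul, inv_mul_cancel_left₀ (hnR N).ne']
  have hbbound : ∀ N, ‖b N‖ ≤ C' := by
    intro N
    rw [hb, hnorm_smul]
    calc ((S.card:ℝ))⁻¹ * ‖∑ h ∈ S, A' N h‖
        ≤ ((S.card:ℝ))⁻¹ * ∑ h ∈ S, ‖A' N h‖ :=
          mul_le_mul_of_nonneg_left (norm_sum_le _ _) (by positivity)
      _ ≤ ((S.card:ℝ))⁻¹ * ∑ _h ∈ S, C' :=
          mul_le_mul_of_nonneg_left (Finset.sum_le_sum (fun h _ => hA'bound N h)) (by positivity)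
      _ = C' := by rw [Finset.sum_const, nsmul_eq_mul, inv_mul_cancel_left₀ hSc.ne']
  -- Step 4: key inequality ‖b N‖^2 ≤ v N
  have step4 : ∀ N, ‖b N‖ ^ 2 ≤ v N := by
    intro N
    set y : G → H := fun g => ∑ h ∈ S, x (g + h) with hy
    have hbN : b N = ((S.card : ℂ))⁻¹ • (((Φ N).card : ℂ))⁻¹ • ∑ g ∈ Φ N, y g := by
      rw [hb]
      congr 1
      simp only [hA', hy]
      rw [← Finset.smul_sum]
      congr 1
      congr 1
      exact Finset.sum_comm (s := S) (t := Φ N) (f := fun h g => x (g + h))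
    have hynorm : ∀ g, ‖y g‖ ^ 2 = ∑ h ∈ S, ∑ h' ∈ S,
        ((inner ℂ (x (g + h)) (x (g + h')) : ℂ)).re := by
      intro g
      rw [norm_sq_eq_re_inner (𝕜 := ℂ), hy]
      rw [sum_inner]
      rw [map_sum]
      refine Finset.sum_congr rfl (fun h _ => ?_)
      rw [inner_sum]
      rw [map_sum]
      exact Finset.sum_congr rfl (fun h' _ => by simp)
    have hCS : ‖∑ g ∈ Φ N, y g‖ ^ 2 ≤ ((Φ N).card : ℝ) * ∑ g ∈ Φ N, ‖y g‖ ^ 2 := by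
      calc ‖∑ g ∈ Φ N, y g‖ ^ 2 ≤ (∑ g ∈ Φ N, ‖y g‖) ^ 2 :=
            pow_le_pow_left₀ (norm_nonneg _) (norm_sum_le _ _) 2
        _ ≤ ((Φ N).card : ℝ) * ∑ g ∈ Φ N, ‖y g‖ ^ 2 := by
            exact_mod_cast sq_sum_le_card_mul_sum_sq (s := Φ N) (f := fun g => ‖y g‖)
    have hveq : v N = (1 / (S.card : ℝ) ^ 2) * ((∑ g ∈ Φ N, ‖y g‖ ^ 2) / (Φ N).card) := by
      rw [hv]
      congr 1
      simp only [← Finset.sum_div]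
      congr 1
      have hgy : ∑ g ∈ Φ N, ‖y g‖ ^ 2 = ∑ g ∈ Φ N, ∑ h ∈ S, ∑ h' ∈ S,
          ((inner ℂ (x (g + h)) (x (g + h')) : ℂ)).re :=
        Finset.sum_congr rfl (fun g _ => hynorm g)
      congr 1
      exact ((Finset.sum_congr rfl fun h _ => Finset.sum_comm).trans Finset.sum_comm).trans
        hgy.symm
    have hbnorm : ‖b N‖ ^ 2 =
        ((S.card:ℝ))⁻¹ ^ 2 * (((Φ N).card:ℝ))⁻¹ ^ 2 * ‖∑ g ∈ Φ N, y g‖ ^ 2 := by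
      rw [hbN, hnorm_smul, hnorm_smul]
      ring
    rw [hbnorm, hveq]
    rw [one_div, ← inv_pow]
    rw [mul_assoc]
    refine mul_le_mul_of_nonneg_left ?_ (by positivity)
    rw [div_eq_inv_mul]
    calc (((Φ N).card:ℝ))⁻¹ ^ 2 * ‖∑ g ∈ Φ N, y g‖ ^ 2
        ≤ (((Φ N).card:ℝ))⁻¹ ^ 2 * (((Φ N).card : ℝ) * ∑ g ∈ Φ N, ‖y g‖ ^ 2) :=
          mul_le_mul_of_nonneg_left hCS (by positivity)
      _ = (((Φ N).card:ℝ))⁻¹ * ∑ g ∈ Φ N, ‖y g‖ ^ 2 := by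
          rw [sq, mul_assoc, inv_mul_cancel_left₀ (hnR N).ne']
  set d : ℕ → ℝ := fun N => ‖A N - b N‖ with hd
  -- Step 5: pointwise estimate
  have step5 : ∀ N, u N ≤ v N + (2 * C' * d N + d N ^ 2) := by
    intro N
    have h1 : ‖A N‖ ≤ ‖b N‖ + d N := by
      calc ‖A N‖ = ‖b N + (A N - b N)‖ := by rw [add_sub_cancel]
        _ ≤ ‖b N‖ + ‖A N - b N‖ := norm_add_le _ _
    have h2 : u N ≤ (‖b N‖ + d N) ^ 2 := pow_le_pow_left₀ (norm_nonneg _) h1 2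
    nlinarith [step4 N, hbbound N, norm_nonneg (A N - b N), norm_nonneg (b N)]
  -- bound on v
  have hr : ∀ (g h h' : G), |((inner ℂ (x (g + h)) (x (g + h')) : ℂ)).re| ≤ C' ^ 2 := by
    intro g h h'
    calc |((inner ℂ (x (g + h)) (x (g + h')) : ℂ)).re| ≤ ‖(inner ℂ (x (g + h)) (x (g + h')) : ℂ)‖ :=
          Complex.abs_re_le_norm _
      _ ≤ ‖x (g + h)‖ * ‖x (g + h')‖ := norm_inner_le_norm _ _
      _ ≤ C' * C' := mul_le_mul (hC' _) (hC' _) (norm_nonneg _) hC'0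
      _ = C' ^ 2 := (sq C').symm
  have hterm : ∀ (N : ℕ) (h h' : G),
      |(∑ g ∈ Φ N, ((inner ℂ (x (g + h)) (x (g + h')) : ℂ)).re) / ((Φ N).card : ℝ)| ≤ C' ^ 2 := by
    intro N h h'
    rw [abs_div, abs_of_pos (hnR N), div_le_iff₀ (hnR N)]
    calc |∑ g ∈ Φ N, ((inner ℂ (x (g + h)) (x (g + h')) : ℂ)).re|
        ≤ ∑ g ∈ Φ N, |((inner ℂ (x (g + h)) (x (g + h')) : ℂ)).re| :=
          Finset.abs_sum_le_sum_abs _ _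
      _ ≤ ∑ _g ∈ Φ N, C' ^ 2 := Finset.sum_le_sum (fun g _ => hr g h h')
      _ = C' ^ 2 * (Φ N).card := by rw [Finset.sum_const, nsmul_eq_mul]; ring
  have hvabs : ∀ N, |v N| ≤ C' ^ 2 := by
    intro N
    have h1 : |∑ h ∈ S, ∑ h' ∈ S,
        (∑ g ∈ Φ N, ((inner ℂ (x (g + h)) (x (g + h')) : ℂ)).re) / ((Φ N).card : ℝ)|
        ≤ (S.card : ℝ) ^ 2 * C' ^ 2 := by
      calc |∑ h ∈ S, ∑ h' ∈ S,
          (∑ g ∈ Φ N, ((inner ℂ (x (g + h)) (x (g + h')) : ℂ)).re) / ((Φ N).card : ℝ)|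
          ≤ ∑ h ∈ S, |∑ h' ∈ S,
            (∑ g ∈ Φ N, ((inner ℂ (x (g + h)) (x (g + h')) : ℂ)).re) / ((Φ N).card : ℝ)| :=
            Finset.abs_sum_le_sum_abs _ _
        _ ≤ ∑ h ∈ S, ∑ h' ∈ S,
            |(∑ g ∈ Φ N, ((inner ℂ (x (g + h)) (x (g + h')) : ℂ)).re) / ((Φ N).card : ℝ)| :=
            Finset.sum_le_sum (fun h _ => Finset.abs_sum_le_sum_abs _ _)
        _ ≤ ∑ _h ∈ S, ∑ _h' ∈ S, C' ^ 2 :=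
            Finset.sum_le_sum (fun h _ => Finset.sum_le_sum (fun h' _ => hterm N h h'))
        _ = (S.card : ℝ) ^ 2 * C' ^ 2 := by
            rw [Finset.sum_const, Finset.sum_const, nsmul_eq_mul, nsmul_eq_mul]
            ring
    have h2 : |v N| ≤ (1 / (S.card : ℝ) ^ 2) * ((S.card : ℝ) ^ 2 * C' ^ 2) := by
      rw [hv, abs_mul, abs_of_nonneg (by positivity : (0:ℝ) ≤ 1 / (S.card : ℝ) ^ 2)]
      exact mul_le_mul_of_nonneg_left h1 (by positivity)
    calc |v N| ≤ (1 / (S.card : ℝ) ^ 2) * ((S.card : ℝ) ^ 2 * C' ^ 2) := h2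
      _ = C' ^ 2 := by field_simp
  -- ε tends to 0
  have heps : Tendsto (fun N => 2 * C' * d N + d N ^ 2) atTop (nhds 0) := by
    have h1 : Tendsto (fun N => 2 * C' * d N + d N * d N) atTop
        (nhds (2 * C' * 0 + 0 * 0)) := (step3.const_mul _).add (step3.mul step3)
    simpa [sq] using h1
  -- final limsup argument
  have main : ∀ δ : ℝ, 0 < δ → limsup u atTop ≤ limsup v atTop + δ := by
    intro δ hδ
    have hev : ∀ᶠ N in atTop, u N ≤ v N + δ := by
      filter_upwards [heps.eventually_le_const hδ] with N hN
      exact (step5 N).trans (by linarith)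
    have h1 : limsup u atTop ≤ limsup (fun N => v N + δ) atTop := by
      refine limsup_le_limsup hev ?_ ?_
      · exact isCoboundedUnder_le_of_le atTop (fun N => sq_nonneg ‖A N‖)
      · exact isBoundedUnder_of ⟨C' ^ 2 + δ, fun N => by
          have := (abs_le.1 (hvabs N)).2; linarith⟩
    have h2 : limsup (fun N => v N + δ) atTop = limsup v atTop + δ := by
      refine limsup_add_const atTop v δ ?_ ?_
      · exact isBoundedUnder_of ⟨C' ^ 2, fun N => (abs_le.1 (hvabs N)).2⟩
      · exact IsBoundedUnder.isCoboundedUnder_le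
          (isBoundedUnder_of ⟨-(C' ^ 2), fun N => (abs_le.1 (hvabs N)).1⟩)
    exact h1.trans_eq h2
  exact le_of_forall_pos_le_add main
end

section
/- Let G be a countable abelian group acting on a Hilbert space H by unitary operators U_g satisfying U_g ∘ U_h = U_{g+h}. Then for any f ∈ H and any Følner sequence (Φ_N) in G, the averages (1/|Φ_N|) ∑_{g ∈ Φ_N} U_g f converge in norm to P f, where P is the orthogonal projection onto the subspace of vectors invariant under all U_g. -/
open Filter Finset

/-- Mean ergodic theorem for unitary actions of countable abelian groups: the Følner
averages `E_{g∈Φ_N} U_g f` converge in norm to the orthogonal projection of `f` onto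
the subspace of invariant vectors (characterized by being invariant and having
`f - Pf` orthogonal to every invariant vector). -/
theorem stmt3 {G : Type*} [AddCommGroup G] [Countable G] [DecidableEq G]
    {H : Type*} [NormedAddCommGroup H] [InnerProductSpace ℂ H] [CompleteSpace H]
    (U : G → H ≃ₗᵢ[ℂ] H) (hU : ∀ g h x, U (g + h) x = U g (U h x))
    (f : H) (Φ : ℕ → Finset G) (hΦ : IsFolner Φ) :
    ∃ Pf : H, (∀ g, U g Pf = Pf) ∧
      (∀ z : H, (∀ g, U g z = z) → (inner ℂ (f - Pf) z : ℂ) = 0) ∧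
      Tendsto (fun N => (((Φ N).card : ℂ))⁻¹ • ∑ g ∈ Φ N, U g f) atTop (nhds Pf) := by
  classical
  obtain ⟨hne, hfol⟩ := hΦ
  -- basic facts about U
  have hU0 : ∀ x : H, U (0 : G) x = x := by
    intro x
    have h : U (0 : G) x = U 0 (U 0 x) := by simpa using hU 0 0 x
    exact ((U (0 : G)).injective h).symm
  have hinv : ∀ (g : G) (x : H), U (-g) (U g x) = x := by
    intro g x
    rw [← hU]; simp [hU0]
  -- cardinality positivity
  have hcardpos : ∀ N, 0 < ((Φ N).card : ℝ) := fun N => by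
    exact_mod_cast Finset.card_pos.2 (hne N)
  have hcardC : ∀ N, ((Φ N).card : ℂ) ≠ 0 := fun N => by
    exact_mod_cast (Finset.card_pos.2 (hne N)).ne'
  -- the invariant subspace
  let S : Submodule ℂ H :=
    { carrier := {x | ∀ g, U g x = x}
      add_mem' := fun {a b} ha hb g => by simp [map_add, ha g, hb g]
      zero_mem' := fun g => by simp
      smul_mem' := fun c a ha g => by simp [map_smul, ha g] }
  have hSmem : ∀ x : H, x ∈ S ↔ ∀ g, U g x = x := fun x => Iff.rfl
  have hSclosed : IsClosed (S : Set H) := by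
    have : (S : Set H) = ⋂ g : G, {x : H | U g x = x} := by
      ext x; simp only [Set.mem_iInter, SetLike.mem_coe]; exact Iff.rfl
    rw [this]
    exact isClosed_iInter fun g =>
      isClosed_eq ((U g).continuous) continuous_id
  haveI : CompleteSpace S := hSclosed.completeSpace_coe
  set Pf : H := (S.orthogonalProjectionOnto f : H) with hPf
  have hPfmem : Pf ∈ S := (S.orthogonalProjectionOnto f).2
  have hw : f - Pf ∈ Sᗮ := S.sub_starProjection_mem_orthogonal f
  set w : H := f - Pf with hwdef
  -- the averaging maps
  set A : ℕ → H → H := fun N x => (((Φ N).card : ℂ))⁻¹ • ∑ g ∈ Φ N, U g x with hA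
  have hAadd : ∀ N x y, A N (x + y) = A N x + A N y := by
    intro N x y; simp [A, Finset.sum_add_distrib, smul_add]
  have hAsub : ∀ N x y, A N (x - y) = A N x - A N y := by
    intro N x y; simp [A, Finset.sum_sub_distrib, smul_sub]
  have hAsmul : ∀ N (c : ℂ) x, A N (c • x) = c • A N x := by
    intro N c x
    simp [A, Finset.smul_sum, smul_comm c]
  have hAnorm : ∀ N x, ‖A N x‖ ≤ ‖x‖ := by
    intro N x
    have h1 : ‖∑ g ∈ Φ N, U g x‖ ≤ ∑ g ∈ Φ N, ‖U g x‖ := norm_sum_le _ _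
    have h2 : ∑ g ∈ Φ N, ‖U g x‖ = ((Φ N).card : ℝ) * ‖x‖ := by
      simp [Finset.sum_const, mul_comm]
    have : ‖A N x‖ = (((Φ N).card : ℝ))⁻¹ * ‖∑ g ∈ Φ N, U g x‖ := by
      simp [A, norm_smul]
    rw [this]
    have h3 : ‖∑ g ∈ Φ N, U g x‖ ≤ ((Φ N).card : ℝ) * ‖x‖ := h2 ▸ h1
    have h4 := mul_le_mul_of_nonneg_left h3 (inv_nonneg.2 (hcardpos N).le)
    refine h4.trans_eq ?_
    rw [← mul_assoc, inv_mul_cancel₀ (hcardpos N).ne', one_mul]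
  -- A N of an invariant vector is that vector
  have hAinv : ∀ N, A N Pf = Pf := by
    intro N
    have : ∑ g ∈ Φ N, U g Pf = ((Φ N).card : ℂ) • Pf := by
      rw [Finset.sum_congr rfl fun g _ => hPfmem g, Finset.sum_const]
      exact (Nat.cast_smul_eq_nsmul ℂ _ _).symm
    simp [A, this, smul_smul, inv_mul_cancel₀ (hcardC N)]
  -- the span of coboundaries
  set D : Set H := {x : H | ∃ (g : G) (y : H), x = U g y - y} with hD
  set T : Submodule ℂ H := Submodule.span ℂ D with hT
  -- T-perp is contained in S
  have hTS : Tᗮ ≤ S := by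
    intro z hz
    intro g
    have key : ∀ y : H, (inner ℂ y (U g z - z) : ℂ) = 0 := by
      intro y
      have hmem : U (-g) y - y ∈ T := Submodule.subset_span ⟨-g, y, rfl⟩
      have h0 : (inner ℂ (U (-g) y - y) z : ℂ) = 0 := hz _ hmem
      have h1 : (inner ℂ (U (-g) y) z : ℂ) = inner ℂ y (U g z) := by
        have : (inner ℂ (U (-g) y) z : ℂ) = inner ℂ (U (-g) y) (U (-g) (U g z)) := by
          rw [hinv g z]
        rw [this, LinearIsometryEquiv.inner_map_map]
      rw [inner_sub_left, h1] at h0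
      rw [inner_sub_right]
      linear_combination h0
    have := key (U g z - z)
    rw [inner_self_eq_zero] at this
    exact sub_eq_zero.1 this
  -- hence w belongs to the closure of T
  have hwT : w ∈ closure (T : Set H) := by
    have h1 : Sᗮ ≤ Tᗮᗮ := Submodule.orthogonal_le hTS
    have h2 : Tᗮᗮ = T.topologicalClosure := T.orthogonal_orthogonal_eq_closure
    have : w ∈ T.topologicalClosure := h2 ▸ h1 hw
    exact this
  -- averages of coboundaries tend to zero
  have hgen : ∀ x ∈ D, Tendsto (fun N => A N x) atTop (nhds 0) := by
    rintro x ⟨h, y, rfl⟩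
    -- norm estimate
    have hbound : ∀ N, ‖A N (U h y - y)‖ ≤
        ((symmDiff (Φ N) ((Φ N).image (fun x => h + x))).card : ℝ) / (Φ N).card * ‖y‖ := by
      intro N
      set B : Finset G := Φ N with hB
      set B' : Finset G := B.image (fun x => h + x) with hB'
      have hsum1 : ∑ g ∈ B, U g (U h y) = ∑ g ∈ B', U g y := by
        rw [hB', Finset.sum_image (by intro a _ b _ hab; exact add_left_cancel hab)]
        refine Finset.sum_congr rfl fun g _ => ?_
        rw [← hU, add_comm]
      have hsplit : ∑ g ∈ B, U g (U h y) - ∑ g ∈ B, U g y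
          = (∑ g ∈ B' \ B, U g y) - ∑ g ∈ B \ B', U g y := by
        rw [hsum1, Finset.sum_sdiff_sub_sum_sdiff]
      have hAeq : A N (U h y - y)
          = ((B.card : ℂ))⁻¹ • ((∑ g ∈ B' \ B, U g y) - ∑ g ∈ B \ B', U g y) := by
        rw [← hsplit]
        simp [A, Finset.sum_sub_distrib, smul_sub, hB]
      have hnorm1 : ‖(∑ g ∈ B' \ B, U g y) - ∑ g ∈ B \ B', U g y‖
          ≤ ((symmDiff B B').card : ℝ) * ‖y‖ := by
        have h1 : ‖(∑ g ∈ B' \ B, U g y) - ∑ g ∈ B \ B', U g y‖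
            ≤ ‖∑ g ∈ B' \ B, U g y‖ + ‖∑ g ∈ B \ B', U g y‖ := norm_sub_le _ _
        have h2 : ‖∑ g ∈ B' \ B, U g y‖ ≤ ((B' \ B).card : ℝ) * ‖y‖ := by
          calc ‖∑ g ∈ B' \ B, U g y‖ ≤ ∑ g ∈ B' \ B, ‖U g y‖ := norm_sum_le _ _
            _ = ((B' \ B).card : ℝ) * ‖y‖ := by simp [Finset.sum_const, mul_comm]
        have h3 : ‖∑ g ∈ B \ B', U g y‖ ≤ ((B \ B').card : ℝ) * ‖y‖ := by
          calc ‖∑ g ∈ B \ B', U g y‖ ≤ ∑ g ∈ B \ B', ‖U g y‖ := norm_sum_le _ _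
            _ = ((B \ B').card : ℝ) * ‖y‖ := by simp [Finset.sum_const, mul_comm]
        have hcard : (symmDiff B B').card = (B \ B').card + (B' \ B).card := by
          rw [symmDiff_def]
          exact Finset.card_union_of_disjoint disjoint_sdiff_sdiff
        calc ‖(∑ g ∈ B' \ B, U g y) - ∑ g ∈ B \ B', U g y‖
            ≤ ((B' \ B).card : ℝ) * ‖y‖ + ((B \ B').card : ℝ) * ‖y‖ :=
              h1.trans (add_le_add h2 h3)
          _ = ((symmDiff B B').card : ℝ) * ‖y‖ := by push_cast [hcard]; ring
      have hAn : ‖A N (U h y - y)‖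
          = ((B.card : ℝ))⁻¹ * ‖(∑ g ∈ B' \ B, U g y) - ∑ g ∈ B \ B', U g y‖ := by
        rw [hAeq, norm_smul]; simp
      rw [hAn, div_eq_inv_mul, mul_assoc]
      exact mul_le_mul_of_nonneg_left hnorm1 (inv_nonneg.2 (Nat.cast_nonneg _))
    have hlim : Tendsto (fun N =>
        ((symmDiff (Φ N) ((Φ N).image (fun x => h + x))).card : ℝ) / (Φ N).card * ‖y‖)
        atTop (nhds 0) := by
      simpa using (hfol h).mul_const ‖y‖
    exact squeeze_zero_norm hbound hlim
  -- averages tend to zero on the span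
  have hspan : ∀ x ∈ T, Tendsto (fun N => A N x) atTop (nhds 0) := by
    intro x hx
    induction hx using Submodule.span_induction with
    | mem x hmem => exact hgen x hmem
    | zero =>
        have : ∀ N, A N (0 : H) = 0 := by intro N; simp [A]
        simpa [this] using tendsto_const_nhds
    | add x y hx hy ihx ihy =>
        have : (fun N => A N (x + y)) = fun N => A N x + A N y := by
          funext N; exact hAadd N x y
        rw [this]
        simpa using ihx.add ihy
    | smul c x hx ihx =>
        have : (fun N => A N (c • x)) = fun N => c • A N x := by
          funext N; exact hAsmul N c x
        rw [this]
        simpa using ihx.const_smul c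
  -- averages tend to zero on the closure
  have hclos : Tendsto (fun N => A N w) atTop (nhds 0) := by
    rw [NormedAddCommGroup.tendsto_nhds_zero]
    intro ε hε
    obtain ⟨v, hvT, hvw⟩ : ∃ v ∈ (T : Set H), dist w v < ε / 2 := by
      rcases Metric.mem_closure_iff.1 hwT (ε / 2) (by linarith) with ⟨v, hvT, hvw⟩
      exact ⟨v, hvT, hvw⟩
    have hv0 : Tendsto (fun N => A N v) atTop (nhds 0) := hspan v hvT
    have hv0' : ∀ᶠ N in atTop, ‖A N v‖ < ε / 2 := by
      have := (NormedAddCommGroup.tendsto_nhds_zero.1 hv0) (ε / 2) (by linarith)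
      exact this
    filter_upwards [hv0'] with N hN
    have h1 : A N w = A N v + A N (w - v) := by
      rw [← hAadd]; congr 1; abel
    have h2 : ‖A N (w - v)‖ ≤ ‖w - v‖ := hAnorm N _
    have h3 : ‖w - v‖ < ε / 2 := by
      rw [dist_eq_norm] at hvw; exact hvw
    calc ‖A N w‖ ≤ ‖A N v‖ + ‖A N (w - v)‖ := by rw [h1]; exact norm_add_le _ _
      _ < ε / 2 + ε / 2 := by
          exact add_lt_add_of_lt_of_le hN (h2.trans h3.le)
      _ = ε := by ring
  -- put things together
  refine ⟨Pf, fun g => hPfmem g, ?_, ?_⟩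
  · intro z hz
    have hzS : z ∈ S := hz
    exact (Submodule.mem_orthogonal' S (f - Pf)).1
      (by simpa [hwdef] using hw) z hzS
  · have hdecomp : ∀ N, A N f = Pf + A N w := by
      intro N
      have : f = Pf + w := by rw [hwdef]; abel
      rw [this, hAadd, hAinv]
    have : Tendsto (fun N => Pf + A N w) atTop (nhds (Pf + 0)) :=
      tendsto_const_nhds.add hclos
    simp only [add_zero] at this
    have heq : (fun N => (((Φ N).card : ℂ))⁻¹ • ∑ g ∈ Φ N, U g f) = fun N => Pf + A N w := by
      funext N; rw [← hdecomp]
    rw [heq]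
    exact this
end

section
/- Let F be a countable field of characteristic zero, let χ ∈ Hom(F, S¹) be a non-trivial character of the additive group, let p ∈ F[x] be a non-constant polynomial, and let (Φ_N) be a Følner sequence in (F,+). Then (1/|Φ_N|) ∑_{n ∈ Φ_N} χ(p(n)) → 0 as N → ∞. -/
open Filter Finset

lemma sum_symmDiff_bound {F : Type*} [DecidableEq F] (f : F → ℂ) (hf : ∀ x, ‖f x‖ ≤ 1)
    (A B : Finset F) :
    ‖∑ x ∈ A, f x - ∑ x ∈ B, f x‖ ≤ ((symmDiff A B).card : ℝ) := by
  have h1 : ∑ x ∈ A, f x - ∑ x ∈ B, f x = ∑ x ∈ A \ B, f x - ∑ x ∈ B \ A, f x := by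
    rw [← Finset.sum_inter_add_sum_sdiff A B f, ← Finset.sum_inter_add_sum_sdiff B A f,
      Finset.inter_comm]
    ring
  have key : ∀ C : Finset F, ‖∑ x ∈ C, f x‖ ≤ (C.card : ℝ) := by
    intro C
    calc ‖∑ x ∈ C, f x‖ ≤ ∑ x ∈ C, ‖f x‖ := norm_sum_le _ _
    _ ≤ ∑ _x ∈ C, (1:ℝ) := Finset.sum_le_sum fun i _ => hf i
    _ = (C.card : ℝ) := by simp
  have h2 : (symmDiff A B).card = (A \ B).card + (B \ A).card := by
    rw [symmDiff_def]
    exact Finset.card_union_of_disjoint (disjoint_sdiff_sdiff)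
  rw [h1, h2]
  calc ‖∑ x ∈ A \ B, f x - ∑ x ∈ B \ A, f x‖
      ≤ ‖∑ x ∈ A \ B, f x‖ + ‖∑ x ∈ B \ A, f x‖ := norm_sub_le _ _
  _ ≤ ((A \ B).card : ℝ) + ((B \ A).card : ℝ) := add_le_add (key _) (key _)
  _ = _ := by push_cast; ring

lemma char_avg {F : Type*} [AddCommGroup F] [DecidableEq F] (ψ : F → ℂ)
    (hhom : ∀ a b, ψ (a + b) = ψ a * ψ b) (hmod : ∀ a, ‖ψ a‖ = 1)
    (g : F) (hg : ψ g ≠ 1) (Φ : ℕ → Finset F) (hΦ : IsFolner Φ) :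
    Tendsto (fun N => (∑ n ∈ Φ N, ψ n) / ((Φ N).card : ℂ)) atTop (nhds 0) := by
  set c := ‖ψ g - 1‖ with hc
  have hcpos : 0 < c := by
    rw [hc, norm_pos_iff]
    exact sub_ne_zero.mpr hg
  apply squeeze_zero_norm
    (a := fun N => c⁻¹ * (((symmDiff (Φ N) ((Φ N).image (fun x => g + x))).card : ℝ) / (Φ N).card))
  · intro N
    have h2 : ∑ n ∈ (Φ N).image (fun x => g + x), ψ n = ψ g * ∑ n ∈ Φ N, ψ n := by
      rw [Finset.sum_image (by intro x _ y _ h; exact add_left_cancel h)]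
      simp only [hhom, Finset.mul_sum]
    have h3 : c * ‖∑ n ∈ Φ N, ψ n‖ ≤ ((symmDiff (Φ N) ((Φ N).image (fun x => g + x))).card : ℝ) := by
      rw [hc, ← norm_mul, sub_mul, one_mul, ← h2, symmDiff_comm]
      exact sum_symmDiff_bound ψ (fun x => (hmod x).le) _ _
    have h4 : ‖∑ n ∈ Φ N, ψ n‖ ≤ c⁻¹ * ((symmDiff (Φ N) ((Φ N).image (fun x => g + x))).card : ℝ) :=
      by rw [← le_div_iff₀' hcpos] at h3; simpa [div_eq_inv_mul] using h3
    rw [norm_div, Complex.norm_natCast]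
    calc ‖∑ n ∈ Φ N, ψ n‖ / ((Φ N).card : ℝ)
        ≤ (c⁻¹ * ((symmDiff (Φ N) ((Φ N).image (fun x => g + x))).card : ℝ)) / (Φ N).card := by
          gcongr
    _ = _ := mul_div_assoc _ _ _
  · have := (hΦ.2 g).const_mul c⁻¹
    simpa using this

lemma taylor_sub_natDegree {F : Type*} [Field F] [CharZero F] (p : Polynomial F)
    (hp : 2 ≤ p.natDegree) (c : F) (hc : c ≠ 0) :
    0 < (Polynomial.taylor c p - p).natDegree ∧
      (Polynomial.taylor c p - p).natDegree < p.natDegree := by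
  set d := p.natDegree - 1 with hd
  have hD : p.natDegree = d + 1 := by omega
  have hd1 : 1 ≤ d := by omega
  have hp0 : p ≠ 0 := fun h => by simp [h] at hp
  -- lower bound: coeff d of taylor c p - p is (d+1) * leadingCoeff p * c ≠ 0
  have hcoeff : (Polynomial.taylor c p - p).coeff d = (d + 1 : F) * p.leadingCoeff * c := by
    rw [Polynomial.coeff_sub, Polynomial.taylor_coeff]
    have hlt : (Polynomial.hasseDeriv d p).natDegree < 2 := by
      have := Polynomial.natDegree_hasseDeriv_le p d
      omega
    rw [Polynomial.eval_eq_sum_range' hlt]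
    rw [Finset.sum_range_succ, Finset.sum_range_succ, Finset.sum_range_zero]
    rw [Polynomial.hasseDeriv_coeff, Polynomial.hasseDeriv_coeff]
    simp only [Nat.choose_self, zero_add, pow_zero, pow_one, Nat.cast_one, one_mul]
    have h1 : (1 + d).choose d = d + 1 := by
      rw [add_comm]
      exact Nat.choose_succ_self_right d
    rw [h1]
    have h2 : p.coeff (1 + d) = p.leadingCoeff := by
      rw [Polynomial.leadingCoeff, hD]; ring_nf
    rw [h2]
    push_cast
    ring
  have hcne : (Polynomial.taylor c p - p).coeff d ≠ 0 := by
    rw [hcoeff]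
    have : ((d:F) + 1) ≠ 0 := by
      have : ((d+1 : ℕ) : F) ≠ 0 := Nat.cast_ne_zero.mpr (by omega)
      push_cast at this; exact this
    exact mul_ne_zero (mul_ne_zero this (Polynomial.leadingCoeff_ne_zero.mpr hp0)) hc
  have hlow : d ≤ (Polynomial.taylor c p - p).natDegree :=
    Polynomial.le_natDegree_of_ne_zero hcne
  have hne : Polynomial.taylor c p - p ≠ 0 := fun h => by simp [h] at hcne
  -- upper bound via degree_sub_lt
  have htne : (Polynomial.taylor c p : Polynomial F) ≠ 0 := by
    intro h
    apply hp0
    have := Polynomial.taylor_taylor p (-c) c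
    rw [h] at this
    simpa using this.symm
  have hdeg : (Polynomial.taylor c p).degree = p.degree := by
    rw [Polynomial.degree_eq_natDegree htne, Polynomial.degree_eq_natDegree hp0,
      Polynomial.natDegree_taylor]
  have hlead : (Polynomial.taylor c p).leadingCoeff = p.leadingCoeff := by
    rw [Polynomial.taylor_apply, Polynomial.leadingCoeff_comp (by simp)]
    simp [Polynomial.leadingCoeff_X_add_C]
  have hup : (Polynomial.taylor c p - p).degree < p.degree := by
    have := Polynomial.degree_sub_lt hdeg htne hlead
    rwa [hdeg] at this
  have hup' : (Polynomial.taylor c p - p).natDegree < p.natDegree :=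
    Polynomial.natDegree_lt_natDegree hne hup
  exact ⟨by omega, hup'⟩

lemma linear_case {F : Type*} [Field F] [DecidableEq F]
    (χ : F → ℂ) (hhom : ∀ a b, χ (a + b) = χ a * χ b) (hmod : ∀ a, ‖χ a‖ = 1)
    (hnontriv : ∃ g, χ g ≠ 1)
    (p : Polynomial F) (hp1 : p.natDegree = 1)
    (Φ : ℕ → Finset F) (hΦ : IsFolner Φ) :
    Tendsto (fun N => (∑ n ∈ Φ N, χ (p.eval n)) / ((Φ N).card : ℂ)) atTop (nhds 0) := by
  obtain ⟨g, hg⟩ := hnontriv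
  set a := p.coeff 1 with ha'
  set b := p.coeff 0 with hb'
  have hp0 : p ≠ 0 := fun h => by simp [h] at hp1
  have ha : a ≠ 0 := by
    have : a = p.leadingCoeff := by rw [ha', Polynomial.leadingCoeff, hp1]
    rw [this]
    exact Polynomial.leadingCoeff_ne_zero.mpr hp0
  have heval : ∀ n : F, p.eval n = b + a * n := by
    intro n
    rw [Polynomial.eval_eq_sum_range' (show p.natDegree < 2 by omega)]
    rw [Finset.sum_range_succ, Finset.sum_range_succ, Finset.sum_range_zero]
    simp [mul_comm]
    rfl
  have key : (fun N => (∑ n ∈ Φ N, χ (p.eval n)) / ((Φ N).card : ℂ)) =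
      fun N => χ b * ((∑ n ∈ Φ N, χ (a * n)) / ((Φ N).card : ℂ)) := by
    funext N
    rw [mul_div_assoc', Finset.mul_sum]
    congr 1
    exact Finset.sum_congr rfl fun n _ => by rw [heval n, hhom]
  rw [key]
  have hψhom : ∀ x y : F, χ (a * (x + y)) = χ (a * x) * χ (a * y) := by
    intro x y
    rw [mul_add, hhom]
  have hψg : χ (a * (a⁻¹ * g)) ≠ 1 := by
    rwa [mul_inv_cancel_left₀ ha]
  have := char_avg (fun n => χ (a * n)) hψhom (fun x => hmod _) (a⁻¹ * g) hψg Φ hΦ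
  simpa using this.const_mul (χ b)

lemma main_aux {F : Type*} [Field F] [CharZero F] [DecidableEq F]
    (χ : F → ℂ) (hhom : ∀ a b, χ (a + b) = χ a * χ b) (hmod : ∀ a, ‖χ a‖ = 1)
    (hnontriv : ∃ g, χ g ≠ 1)
    (Φ : ℕ → Finset F) (hΦ : IsFolner Φ) :
    ∀ d (p : Polynomial F), p.natDegree ≤ d → 0 < p.natDegree →
      Tendsto (fun N => (∑ n ∈ Φ N, χ (p.eval n)) / ((Φ N).card : ℂ)) atTop (nhds 0) := by
  -- character facts
  have hχne : ∀ x, χ x ≠ 0 := by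
    intro x h
    have := hmod x
    rw [h] at this
    simp at this
  have hcc : ∀ y, χ y * (starRingEnd ℂ) (χ y) = 1 := by
    intro y
    rw [Complex.mul_conj, Complex.normSq_eq_norm_sq, hmod]
    norm_num
  have hχsub : ∀ x y : F, χ x * (starRingEnd ℂ) (χ y) = χ (x - y) := by
    intro x y
    have h1 : χ y * χ (x - y) = χ x := by rw [← hhom]; ring_nf
    calc χ x * (starRingEnd ℂ) (χ y) = (χ y * χ (x - y)) * (starRingEnd ℂ) (χ y) := by rw [h1]
    _ = (χ y * (starRingEnd ℂ) (χ y)) * χ (x - y) := by ring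
    _ = χ (x - y) := by rw [hcc y, one_mul]
  intro d
  induction d with
  | zero => intro p h1 h2; omega
  | succ d IH =>
    intro p hle hpos
    rcases Nat.lt_or_ge p.natDegree (d + 1) with hlt | hge
    · exact IH p (by omega) hpos
    have hD : p.natDegree = d + 1 := le_antisymm hle hge
    rcases Nat.eq_zero_or_pos d with rfl | hd1
    · exact linear_case χ hhom hmod hnontriv p hD Φ hΦ
    -- van der Corput
    rw [NormedAddCommGroup.tendsto_nhds_zero]
    intro ε hε
    obtain ⟨k, hk⟩ := exists_nat_gt (8 / ε ^ 2)
    have h8 : (0:ℝ) < 8 / ε ^ 2 := by positivity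
    have hk0 : 0 < k := by exact_mod_cast Nat.cast_pos.mp (h8.trans hk)
    have hkR : (0:ℝ) < k := by exact_mod_cast hk0
    have hkinv : (1:ℝ) / k < ε ^ 2 / 8 := by
      rw [div_lt_iff₀ (by positivity)] at hk
      rw [div_lt_div_iff₀ hkR (by norm_num)]
      nlinarith
    set H : Finset F := (Finset.range k).image (Nat.cast) with hH
    have hHcard : H.card = k := by
      rw [hH, Finset.card_image_of_injective _ Nat.cast_injective, Finset.card_range]
    have hHne : H.Nonempty := by rw [← Finset.card_pos, hHcard]; exact hk0
    set u : F → ℂ := fun n => χ (p.eval n) with hu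
    set A : ℕ → ℝ := fun N => ((Φ N).card : ℝ) with hA
    have hApos : ∀ N, 0 < A N := fun N => by
      have := Finset.card_pos.mpr (hΦ.1 N)
      simp only [hA]
      exact_mod_cast this
    set S : ℕ → ℂ := fun N => ∑ n ∈ Φ N, u n with hS
    set Sh : F → ℕ → ℂ := fun h N => ∑ n ∈ Φ N, u (n + h) with hSh
    -- Følner error bound
    have err_h : ∀ (h : F) (N : ℕ), ‖S N - Sh h N‖ ≤
        ((symmDiff (Φ N) ((Φ N).image (fun x => h + x))).card : ℝ) := by
      intro h N
      have himg : Sh h N = ∑ m ∈ (Φ N).image (fun x => h + x), u m := by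
        rw [Finset.sum_image (fun x _ y _ hxy => add_left_cancel hxy)]
        exact Finset.sum_congr rfl fun x _ => by rw [add_comm]
      rw [himg]
      exact sum_symmDiff_bound u (fun x => (hmod _).le) _ _
    have err_tend : ∀ h : F, Tendsto (fun N => ‖S N - Sh h N‖ / A N) atTop (nhds 0) := by
      intro h
      apply squeeze_zero (fun N => by positivity)
        (fun N => by
          have := hApos N
          gcongr
          exact err_h h N) (hΦ.2 h)
    have ev1 : ∀ᶠ N in atTop, ∀ h ∈ H, ‖S N - Sh h N‖ / A N < ε / 4 := by
      rw [Filter.eventually_all_finset]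
      intro h _
      exact (err_tend h).eventually_lt_const (by positivity)
    set W : F → F → ℕ → ℂ := fun h h' N => ∑ n ∈ Φ N, (u (n + h) * (starRingEnd ℂ) (u (n + h'))) with hW
    have hWtend : ∀ h ∈ H, ∀ h' ∈ H, h ≠ h' →
        Tendsto (fun N => W h h' N / ((Φ N).card : ℂ)) atTop (nhds 0) := by
      intro h _ h' _ hne
      set q : Polynomial F := Polynomial.taylor h p - Polynomial.taylor h' p with hq
      have hqeval : ∀ n : F, u (n + h) * (starRingEnd ℂ) (u (n + h')) = χ (q.eval n) := by
        intro n
        rw [hu]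
        simp only []
        rw [hχsub]
        congr 1
        rw [hq, Polynomial.eval_sub, Polynomial.taylor_eval, Polynomial.taylor_eval]
      have hqd : 0 < q.natDegree ∧ q.natDegree < p.natDegree := by
        have hr := taylor_sub_natDegree p (by omega) (h - h') (sub_ne_zero.mpr hne)
        have hqr : q = Polynomial.taylor h' (Polynomial.taylor (h - h') p - p) := by
          rw [hq, map_sub, Polynomial.taylor_taylor]
          congr 2
          ring
        rw [hqr, Polynomial.natDegree_taylor]
        exact hr
      obtain ⟨hq1, hq2⟩ := hqd
      rw [hD] at hq2
      have hIH := IH q (by omega) hq1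
      have heq : (fun N => (∑ n ∈ Φ N, χ (q.eval n)) / ((Φ N).card : ℂ)) =
          fun N => W h h' N / ((Φ N).card : ℂ) := by
        funext N
        congr 1
        exact (Finset.sum_congr rfl fun n _ => (hqeval n).symm)
      rwa [heq] at hIH
    have ev2 : ∀ᶠ N in atTop, ∀ h ∈ H, ∀ h' ∈ H, h ≠ h' → ‖W h h' N‖ / A N < ε ^ 2 / 8 := by
      rw [Filter.eventually_all_finset]
      intro h hh
      rw [Filter.eventually_all_finset]
      intro h' hh'
      by_cases hne : h = h'
      · filter_upwards with N
        intro hcon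
        exact absurd hne hcon
      · have hnorm : Tendsto (fun N => ‖W h h' N‖ / A N) atTop (nhds 0) := by
          have h2 := (hWtend h hh h' hh' hne).norm
          simp only [norm_div, Complex.norm_natCast, norm_zero] at h2
          exact h2
        filter_upwards [hnorm.eventually_lt_const (show (0:ℝ) < ε ^ 2 / 8 by positivity)] with N h3
        intro _
        exact h3
    filter_upwards [ev1, ev2] with N h1 h2
    have hAN := hApos N
    have hACne : ((Φ N).card : ℂ) ≠ 0 :=
      Nat.cast_ne_zero.mpr (Finset.card_pos.mpr (hΦ.1 N)).ne'
    have hkC : ((k : ℂ)) ≠ 0 := Nat.cast_ne_zero.mpr hk0.ne'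
    set T : ℂ := ∑ h ∈ H, Sh h N with hT
    have hsplit : S N / ((Φ N).card : ℂ) - T / ((k : ℂ) * ((Φ N).card : ℂ)) =
        (∑ h ∈ H, (S N - Sh h N)) / ((k : ℂ) * ((Φ N).card : ℂ)) := by
      rw [Finset.sum_sub_distrib, Finset.sum_const, hHcard, nsmul_eq_mul, hT]
      field_simp
    have e1 : ‖S N / ((Φ N).card : ℂ) - T / ((k : ℂ) * ((Φ N).card : ℂ))‖ < ε / 4 := by
      rw [hsplit, norm_div]
      have hden : ‖(k : ℂ) * ((Φ N).card : ℂ)‖ = k * A N := by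
        rw [norm_mul, Complex.norm_natCast, Complex.norm_natCast]
      rw [hden]
      have hnum : ‖∑ h ∈ H, (S N - Sh h N)‖ < k * (ε / 4 * A N) := by
        calc ‖∑ h ∈ H, (S N - Sh h N)‖ ≤ ∑ h ∈ H, ‖S N - Sh h N‖ := norm_sum_le _ _
        _ < ∑ _h ∈ H, (ε / 4 * A N) := by
            apply Finset.sum_lt_sum_of_nonempty hHne
            intro h hh
            have hx := h1 h hh
            rw [div_lt_iff₀ hAN] at hx
            linarith
        _ = k * (ε / 4 * A N) := by rw [Finset.sum_const, hHcard, nsmul_eq_mul]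
      rw [div_lt_iff₀ (by positivity)]
      calc ‖∑ h ∈ H, (S N - Sh h N)‖ < k * (ε / 4 * A N) := hnum
      _ = ε / 4 * (k * A N) := by ring
    set v : F → ℂ := fun n => ∑ h ∈ H, u (n + h) with hv
    have hTv : T = ∑ n ∈ Φ N, v n := by
      rw [hT, hv]
      exact Finset.sum_comm
    set V : ℝ := ∑ n ∈ Φ N, ‖v n‖ ^ 2 with hV
    have cs : ‖T‖ ^ 2 ≤ A N * V := by
      have c1 : ‖T‖ ≤ ∑ n ∈ Φ N, ‖v n‖ := by
        rw [hTv]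
        exact norm_sum_le _ _
      have c2 : (∑ n ∈ Φ N, ‖v n‖) ^ 2 ≤ A N * V := by
        have hcs := Finset.sum_mul_sq_le_sq_mul_sq (Φ N) (fun _ => (1:ℝ)) (fun n => ‖v n‖)
        simpa [hV, hA, one_mul, mul_one] using hcs
      calc ‖T‖ ^ 2 ≤ (∑ n ∈ Φ N, ‖v n‖) ^ 2 := by
            apply pow_le_pow_left₀ (norm_nonneg _) c1
      _ ≤ A N * V := c2
    have hVW : V ≤ ∑ h ∈ H, ∑ h' ∈ H, ‖W h h' N‖ := by
      have hnormsq : ∀ z : ℂ, ‖z‖ ^ 2 = (z * (starRingEnd ℂ) z).re := by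
        intro z
        rw [Complex.mul_conj, Complex.ofReal_re, Complex.normSq_eq_norm_sq]
      have hvexp : ∀ n : F, v n * (starRingEnd ℂ) (v n) =
          ∑ h ∈ H, ∑ h' ∈ H, u (n + h) * (starRingEnd ℂ) (u (n + h')) := by
        intro n
        rw [hv]
        simp only [map_sum]
        rw [Finset.sum_mul_sum]
      have hVre : V = (∑ h ∈ H, ∑ h' ∈ H, W h h' N).re := by
        rw [hV]
        simp only [hnormsq, hvexp]
        rw [← Complex.re_sum]
        congr 1
        rw [hW]
        simp only []
        rw [Finset.sum_comm]
        exact Finset.sum_congr rfl fun h _ => Finset.sum_comm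
      rw [hVre]
      calc (∑ h ∈ H, ∑ h' ∈ H, W h h' N).re ≤ ‖∑ h ∈ H, ∑ h' ∈ H, W h h' N‖ := by
            exact Complex.re_le_norm _
      _ ≤ ∑ h ∈ H, ‖∑ h' ∈ H, W h h' N‖ := norm_sum_le _ _
      _ ≤ ∑ h ∈ H, ∑ h' ∈ H, ‖W h h' N‖ := Finset.sum_le_sum fun h _ => norm_sum_le _ _
    have hdiag : ∀ h : F, ‖W h h N‖ = A N := by
      intro h
      have hWh : W h h N = ((Φ N).card : ℂ) := by
        rw [hW]
        simp only []
        rw [Finset.sum_congr rfl (fun n _ => hcc (p.eval (n + h)))]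
        simp
      rw [hWh, Complex.norm_natCast]
    have hWsum : ∑ h ∈ H, ∑ h' ∈ H, ‖W h h' N‖ ≤ k * A N + k * (k * (ε ^ 2 / 8 * A N)) := by
      have hin : ∀ h ∈ H, ∑ h' ∈ H, ‖W h h' N‖ ≤ A N + k * (ε ^ 2 / 8 * A N) := by
        intro h hh
        rw [← Finset.add_sum_erase H _ hh, hdiag]
        have hb : ∑ h' ∈ H.erase h, ‖W h h' N‖ ≤ (H.erase h).card • (ε ^ 2 / 8 * A N) := by
          apply Finset.sum_le_card_nsmul
          intro h' hh'
          have hne' : h' ≠ h := Finset.ne_of_mem_erase hh'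
          have hx := h2 h hh h' (Finset.mem_of_mem_erase hh') (Ne.symm hne')
          rw [div_lt_iff₀ hAN] at hx
          linarith
        have hcard : (((H.erase h).card : ℝ)) ≤ k := by
          have := Finset.card_erase_le (s := H) (a := h)
          rw [hHcard] at this
          exact_mod_cast this
        have hnn : (0:ℝ) ≤ ε ^ 2 / 8 * A N := by positivity
        rw [nsmul_eq_mul] at hb
        nlinarith
      calc ∑ h ∈ H, ∑ h' ∈ H, ‖W h h' N‖ ≤ ∑ _h ∈ H, (A N + k * (ε ^ 2 / 8 * A N)) :=
            Finset.sum_le_sum hin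
      _ = k * (A N + k * (ε ^ 2 / 8 * A N)) := by rw [Finset.sum_const, hHcard, nsmul_eq_mul]
      _ = k * A N + k * (k * (ε ^ 2 / 8 * A N)) := by ring
    have e2 : ‖T / ((k : ℂ) * ((Φ N).card : ℂ))‖ < ε / 2 := by
      have hnorm : ‖T / ((k : ℂ) * ((Φ N).card : ℂ))‖ = ‖T‖ / (k * A N) := by
        rw [norm_div, norm_mul, Complex.norm_natCast, Complex.norm_natCast]
      rw [hnorm]
      have hkey : ‖T‖ ^ 2 < ε ^ 2 / 4 * (k * A N) ^ 2 := by
        have hVb : V ≤ k * A N + k * (k * (ε ^ 2 / 8 * A N)) := le_trans hVW hWsum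
        have step1 : ‖T‖ ^ 2 ≤ A N * (k * A N + k * (k * (ε ^ 2 / 8 * A N))) :=
          cs.trans (mul_le_mul_of_nonneg_left hVb hAN.le)
        have hlt : (1:ℝ) < ε ^ 2 / 8 * k := (div_lt_iff₀ hkR).mp hkinv
        have hpos2 : (0:ℝ) < k * A N * A N := mul_pos (mul_pos hkR hAN) hAN
        have h1k : (1:ℝ) * (k * A N * A N) < ε ^ 2 / 8 * k * (k * A N * A N) :=
          mul_lt_mul_of_pos_right hlt hpos2
        have e3 : A N * (k * A N + k * (k * (ε ^ 2 / 8 * A N)))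
            = 1 * (k * A N * A N) + ε ^ 2 / 8 * k * (k * A N * A N) := by ring
        have e4 : ε ^ 2 / 4 * (k * A N) ^ 2
            = ε ^ 2 / 8 * k * (k * A N * A N) + ε ^ 2 / 8 * k * (k * A N * A N) := by ring
        linarith
      have hsq : (‖T‖ / (k * A N)) ^ 2 < (ε / 2) ^ 2 := by
        rw [div_pow, div_lt_iff₀ (pow_pos (mul_pos hkR hAN) 2)]
        have e5 : (ε / 2) ^ 2 * (k * A N) ^ 2 = ε ^ 2 / 4 * (k * A N) ^ 2 := by ring
        linarith
      exact lt_of_pow_lt_pow_left₀ 2 (by linarith : (0:ℝ) ≤ ε / 2) hsq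
    have hfinal : ‖S N / ((Φ N).card : ℂ)‖ < ε := by
      calc ‖S N / ((Φ N).card : ℂ)‖
          = ‖(S N / ((Φ N).card : ℂ) - T / ((k : ℂ) * ((Φ N).card : ℂ)))
              + T / ((k : ℂ) * ((Φ N).card : ℂ))‖ := by ring_nf
      _ ≤ ‖S N / ((Φ N).card : ℂ) - T / ((k : ℂ) * ((Φ N).card : ℂ))‖
            + ‖T / ((k : ℂ) * ((Φ N).card : ℂ))‖ := norm_add_le _ _
      _ < ε / 4 + ε / 2 := add_lt_add e1 e2
      _ < ε := by linarith
    exact hfinal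

/-- For a countable field `F` of characteristic zero, a non-trivial character `χ` of
`(F,+)`, and a non-constant polynomial `p ∈ F[x]`, the averages of `χ(p(n))` along
any Følner sequence converge to `0`. -/
theorem stmt4 {F : Type*} [Field F] [CharZero F] [Countable F] [DecidableEq F]
    (χ : F → ℂ) (hhom : ∀ a b, χ (a + b) = χ a * χ b) (hmod : ∀ a, ‖χ a‖ = 1)
    (hnontriv : ∃ g, χ g ≠ 1)
    (p : Polynomial F) (hp : 0 < p.natDegree)
    (Φ : ℕ → Finset F) (hΦ : IsFolner Φ) :
    Tendsto (fun N => (∑ n ∈ Φ N, χ (p.eval n)) / ((Φ N).card : ℂ)) atTop (nhds 0) :=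
  main_aux χ hhom hmod hnontriv Φ hΦ p.natDegree p le_rfl hp
end

section
/- Let F be a countable field of characteristic zero, let χ₁, …, χ_k be characters of the additive group of F, not all trivial, satisfying no non-trivial multiplicative relation (i.e., there are no a₁,…,a_k ∈ F, not all zero, with χ₁(a₁n)⋯χ_k(a_k n) = 1 for all n ∈ F). Let p₁, …, p_k ∈ F[x] be linearly independent polynomials with p_i(0) = 0, and let (Φ_N) be a Følner sequence in (F,+). Then (1/|Φ_N|) ∑_{n ∈ Φ_N} χ₁(p₁(n))⋯χ_k(p_k(n)) → 0. -/
open Filter Finset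

set_option linter.unusedSectionVars false
set_option maxHeartbeats 1000000

noncomputable def favg {G : Type*} [AddCommGroup G] [DecidableEq G]
    (Φ : ℕ → Finset G) (N : ℕ) (f : G → ℂ) : ℂ :=
  (∑ n ∈ Φ N, f n) / ((Φ N).card : ℂ)

section
variable {G : Type*} [AddCommGroup G] [DecidableEq G]

lemma sum_diff_le (A B : Finset G) (f : G → ℂ) (hf : ∀ n, ‖f n‖ ≤ 1) :
    ‖(∑ n ∈ B, f n) - ∑ n ∈ A, f n‖ ≤ ((symmDiff A B).card : ℝ) := by
  rw [← Finset.sum_sdiff_sub_sum_sdiff]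
  calc ‖(∑ n ∈ B \ A, f n) - ∑ n ∈ A \ B, f n‖
      ≤ ‖∑ n ∈ B \ A, f n‖ + ‖∑ n ∈ A \ B, f n‖ := norm_sub_le _ _
    _ ≤ ((B \ A).card : ℝ) + ((A \ B).card : ℝ) := by
        gcongr
        · exact (norm_sum_le _ _).trans (by
            calc ∑ n ∈ B \ A, ‖f n‖ ≤ ∑ n ∈ B \ A, 1 := Finset.sum_le_sum fun i _ => hf i
              _ = ((B \ A).card : ℝ) := by simp)
        · exact (norm_sum_le _ _).trans (by
            calc ∑ n ∈ A \ B, ‖f n‖ ≤ ∑ n ∈ A \ B, 1 := Finset.sum_le_sum fun i _ => hf i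
              _ = ((A \ B).card : ℝ) := by simp)
    _ = ((symmDiff A B).card : ℝ) := by
        rw [symmDiff_def]
        rw [Finset.sup_eq_union, Finset.card_union_of_disjoint (disjoint_sdiff_sdiff)]
        push_cast
        ring

lemma shift_sum (A : Finset G) (f : G → ℂ) (g : G) :
    ∑ n ∈ A, f (g + n) = ∑ n ∈ A.image (fun x => g + x), f n := by
  rw [Finset.sum_image]
  intro x _ y _ h
  exact add_left_cancel h

lemma shift_avg_tendsto {Φ : ℕ → Finset G} (hΦ : IsFolner Φ) (f : G → ℂ)
    (hf : ∀ n, ‖f n‖ ≤ 1) (g : G) :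
    Tendsto (fun N => favg Φ N (fun n => f (g + n)) - favg Φ N f) atTop (nhds 0) := by
  refine squeeze_zero_norm (fun N => ?_) (hΦ.2 g)
  have hcard : (0:ℝ) < ((Φ N).card : ℝ) := by
    exact_mod_cast Finset.card_pos.2 (hΦ.1 N)
  have : favg Φ N (fun n => f (g + n)) - favg Φ N f
      = ((∑ n ∈ (Φ N).image (fun x => g + x), f n) - ∑ n ∈ Φ N, f n) / ((Φ N).card : ℂ) := by
    rw [favg, favg, ← shift_sum, div_sub_div_same]
  rw [this, norm_div]
  have h2 : ‖((Φ N).card : ℂ)‖ = ((Φ N).card : ℝ) := by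
    simp
  rw [h2]
  have := sum_diff_le (Φ N) ((Φ N).image (fun x => g + x)) f hf
  gcongr

lemma favg_norm_le (Φ : ℕ → Finset G) (N : ℕ) (f : G → ℂ) (hf : ∀ n, ‖f n‖ ≤ 1) :
    ‖favg Φ N f‖ ≤ 1 := by
  rw [favg, norm_div]
  rcases Nat.eq_zero_or_pos (Φ N).card with h | h
  · simp [h]
  · have hc : (0:ℝ) < ((Φ N).card : ℝ) := by exact_mod_cast h
    rw [div_le_one (by simpa using hc)]
    calc ‖∑ n ∈ Φ N, f n‖ ≤ ∑ n ∈ Φ N, ‖f n‖ := norm_sum_le _ _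
      _ ≤ ∑ n ∈ Φ N, 1 := Finset.sum_le_sum fun i _ => hf i
      _ = ((Φ N).card : ℝ) := by simp
      _ ≤ ‖((Φ N).card : ℂ)‖ := by simp

lemma favg_const_mul (Φ : ℕ → Finset G) (N : ℕ) (c : ℂ) (f : G → ℂ) :
    favg Φ N (fun n => c * f n) = c * favg Φ N f := by
  rw [favg, favg, ← Finset.mul_sum, mul_div_assoc]

lemma favg_sum (Φ : ℕ → Finset G) (N : ℕ) {α : Type*} (s : Finset α) (u : α → G → ℂ) :
    favg Φ N (fun n => ∑ i ∈ s, u i n) = ∑ i ∈ s, favg Φ N (u i) := by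
  rw [favg, Finset.sum_comm, Finset.sum_div]
  rfl

lemma char_avg_tendsto {Φ : ℕ → Finset G} (hΦ : IsFolner Φ) (χ : G → ℂ)
    (hhom : ∀ a b, χ (a + b) = χ a * χ b) (hmod : ∀ a, ‖χ a‖ = 1)
    (hnt : ∃ g, χ g ≠ 1) :
    Tendsto (fun N => favg Φ N χ) atTop (nhds 0) := by
  obtain ⟨g, hg⟩ := hnt
  have key : Tendsto (fun N => (χ g - 1) * favg Φ N χ) atTop (nhds 0) := by
    have heq : ∀ N, (χ g - 1) * favg Φ N χ = favg Φ N (fun n => χ (g + n)) - favg Φ N χ := by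
      intro N
      have : favg Φ N (fun n => χ (g + n)) = χ g * favg Φ N χ := by
        rw [← favg_const_mul]
        congr 1
        ext n
        exact hhom g n
      rw [this]; ring
    simp only [heq]
    exact shift_avg_tendsto hΦ χ (fun n => le_of_eq (hmod n)) g
  have h2 := key.const_mul (χ g - 1)⁻¹
  rw [mul_zero] at h2
  have hne : χ g - 1 ≠ 0 := sub_ne_zero.2 hg
  convert h2 using 2 with N
  rw [← mul_assoc, inv_mul_cancel₀ hne, one_mul]

lemma char_zero' (χ : G → ℂ) (hhom : ∀ a b, χ (a + b) = χ a * χ b)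
    (hmod : ∀ a, ‖χ a‖ = 1) : χ 0 = 1 := by
  have h0 : χ 0 = χ 0 * χ 0 := by rw [← hhom, add_zero]
  have hne : χ 0 ≠ 0 := by
    intro hc
    have := hmod 0
    rw [hc] at this
    simp at this
  field_simp at h0
  tauto

lemma char_sum {α : Type*} (χ : G → ℂ) (hhom : ∀ a b, χ (a + b) = χ a * χ b)
    (hmod : ∀ a, ‖χ a‖ = 1) (s : Finset α) (v : α → G) :
    χ (∑ x ∈ s, v x) = ∏ x ∈ s, χ (v x) := by
  classical
  induction s using Finset.induction_on with
  | empty => simpa using char_zero' χ hhom hmod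
  | insert a s hx ih =>
    rw [Finset.sum_insert hx, Finset.prod_insert hx, hhom, ih]

lemma char_conj (χ : G → ℂ) (hhom : ∀ a b, χ (a + b) = χ a * χ b)
    (hmod : ∀ a, ‖χ a‖ = 1) (a : G) :
    (starRingEnd ℂ) (χ a) = χ (-a) := by
  have h1 : χ a * χ (-a) = 1 := by
    rw [← hhom, add_neg_cancel]
    exact char_zero' χ hhom hmod
  have h2 : χ a * (starRingEnd ℂ) (χ a) = 1 := by
    rw [Complex.mul_conj]
    norm_cast
    rw [Complex.normSq_eq_norm_sq, hmod]
    norm_num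
  have hne : χ a ≠ 0 := by
    intro hc
    have := hmod a
    rw [hc] at this
    simp at this
  have : χ a * (starRingEnd ℂ) (χ a) = χ a * χ (-a) := by rw [h1, h2]
  exact mul_left_cancel₀ hne this

end

section
variable {F : Type*} [Field F] [CharZero F] [DecidableEq F]

lemma vdc {Φ : ℕ → Finset F} (hΦ : IsFolner Φ) (f : F → ℂ) (hf : ∀ n, ‖f n‖ ≤ 1)
    (h : ∀ d : F, d ≠ 0 →
      Tendsto (fun N => favg Φ N (fun n => f (d + n) * (starRingEnd ℂ) (f n))) atTop (nhds 0)) :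
    Tendsto (fun N => favg Φ N f) atTop (nhds 0) := by
  rw [NormedAddCommGroup.tendsto_nhds_zero]
  intro ε hε
  -- choose m
  set m : ℕ := ⌈(8:ℝ)/ε^2⌉₊ + 1 with hmdef
  have hmgt : (8:ℝ)/ε^2 < m := by
    calc (8:ℝ)/ε^2 ≤ ⌈(8:ℝ)/ε^2⌉₊ := Nat.le_ceil _
    _ < m := by exact_mod_cast Nat.lt_succ_self _
  have hm0 : 0 < m := Nat.succ_pos _
  have hmR : (0:ℝ) < (m:ℝ) := by exact_mod_cast hm0
  have hm : (1:ℝ)/m < ε^2/8 := by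
    rw [div_lt_div_iff₀ hmR (by norm_num)]
    rw [div_lt_iff₀ (by positivity)] at hmgt
    nlinarith
  -- notation
  set cg : ℂ → ℂ := fun z => (starRingEnd ℂ) z with hcg
  set g : F → ℂ := fun n => ∑ i ∈ range m, f ((i:F) + n) with hg
  set B : ℕ → ℂ := fun N => favg Φ N (fun n => (1/(m:ℂ)) * g n) with hB
  set T : ℕ → ℕ → ℕ → ℂ :=
    fun i j N => favg Φ N (fun n => f ((i:F) + n) * cg (f ((j:F) + n))) with hT
  set R : ℕ → ℝ :=
    fun N => ∑ i ∈ range m, ∑ j ∈ (range m).erase i, ‖T i j N‖ with hR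
  -- Step A : favg f - B → 0
  have stepA : Tendsto (fun N => favg Φ N f - B N) atTop (nhds 0) := by
    have heq : ∀ N, favg Φ N f - B N
        = (1/(m:ℂ)) * ∑ i ∈ range m, (favg Φ N f - favg Φ N (fun n => f ((i:F) + n))) := by
      intro N
      have h1 : B N = (1/(m:ℂ)) * ∑ i ∈ range m, favg Φ N (fun n => f ((i:F) + n)) := by
        simp only [hB]
        rw [favg_const_mul, favg_sum]
      rw [h1, Finset.sum_sub_distrib, Finset.sum_const, card_range, mul_sub]
      have hmC : (m:ℂ) ≠ 0 := by exact_mod_cast hm0.ne'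
      rw [nsmul_eq_mul]
      field_simp
    simp only [heq]
    have h2 : Tendsto (fun N => ∑ i ∈ range m, (favg Φ N f - favg Φ N (fun n => f ((i:F) + n))))
        atTop (nhds 0) := by
      have h3 := tendsto_finset_sum (range m) (fun i (_ : i ∈ range m) =>
        (shift_avg_tendsto hΦ f hf (i:F)).neg)
      simp only [neg_sub, neg_zero] at h3
      simpa using h3
    simpa using h2.const_mul (1/(m:ℂ))
  -- Step C : off-diagonal terms tend to 0
  have offdiag : ∀ i j : ℕ, i ≠ j → Tendsto (fun N => T i j N) atTop (nhds 0) := by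
    intro i j hij
    have hd : (i:F) - (j:F) ≠ 0 := by
      rw [sub_ne_zero]; exact_mod_cast hij
    set u : F → ℂ := fun n => f (((i:F) - (j:F)) + n) * cg (f n) with hu
    have hu1 : ∀ n, ‖u n‖ ≤ 1 := by
      intro n
      rw [hu]
      simp only [norm_mul, hcg, RCLike.norm_conj]
      exact mul_le_one₀ (hf _) (norm_nonneg _) (hf _)
    have key : ∀ n : F, f ((i:F) + n) * cg (f ((j:F) + n)) = u ((j:F) + n) := by
      intro n; rw [hu]; congr 2; ring
    have h1 := shift_avg_tendsto hΦ u hu1 (j:F)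
    have h2 := h ((i:F) - (j:F)) hd
    have h3 : Tendsto (fun N => favg Φ N (fun n => u ((j:F) + n))) atTop (nhds 0) := by
      have := h1.add h2
      simpa [hu, hcg] using this
    have : (fun N => T i j N) = fun N => favg Φ N (fun n => u ((j:F) + n)) := by
      funext N
      rw [hT]
      exact congrArg (favg Φ N) (funext key)
    rw [this]
    exact h3
  -- R → 0
  have hRtend : Tendsto R atTop (nhds 0) := by
    rw [hR]
    have h4 : Tendsto (fun N => ∑ i ∈ range m, ∑ j ∈ (range m).erase i, ‖T i j N‖)
        atTop (nhds (∑ i ∈ range m, ∑ j ∈ (range m).erase i, (0:ℝ))) := by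
      apply tendsto_finset_sum
      intro i _
      apply tendsto_finset_sum
      intro j hj
      simpa using ((offdiag i j (Ne.symm (Finset.ne_of_mem_erase hj))).norm)
    simpa using h4
  -- Step B : pointwise bound on ‖B N‖²
  have stepB : ∀ N, ‖B N‖^2 ≤ 1/(m:ℝ) + R N / (m:ℝ)^2 := by
    intro N
    have hc : (0:ℝ) < ((Φ N).card : ℝ) := by
      exact_mod_cast Finset.card_pos.2 (hΦ.1 N)
    set c : ℝ := ((Φ N).card : ℝ) with hcdef
    -- ‖B N‖ = (1/m) ‖favg g‖
    have hBn : ‖B N‖ = (1/(m:ℝ)) * ‖favg Φ N g‖ := by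
      simp only [hB]
      rw [favg_const_mul, norm_mul]
      congr 1
      simp
    -- key: ‖favg g‖² ≤ m + R N
    have key : ‖favg Φ N g‖^2 ≤ (m:ℝ) + R N := by
      have e1 : ‖favg Φ N g‖ ≤ (∑ n ∈ Φ N, ‖g n‖) / c := by
        rw [favg, norm_div]
        have hnc : ‖(((Φ N).card : ℕ) : ℂ)‖ = c := by simp [hcdef]
        rw [hnc]
        exact div_le_div_of_nonneg_right (norm_sum_le _ _) hc.le
      have e2 : ((∑ n ∈ Φ N, ‖g n‖) / c)^2 ≤ (∑ n ∈ Φ N, ‖g n‖^2) / c := by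
        have hcs : (∑ n ∈ Φ N, ‖g n‖) ^ 2 ≤ (#(Φ N) : ℝ) * ∑ n ∈ Φ N, ‖g n‖ ^ 2 := by
          exact sq_sum_le_card_mul_sum_sq
        have hsqnn : (0:ℝ) ≤ ∑ n ∈ Φ N, ‖g n‖^2 :=
          Finset.sum_nonneg fun n _ => sq_nonneg _
        rw [div_pow, div_le_div_iff₀ (by positivity) hc]
        calc (∑ n ∈ Φ N, ‖g n‖)^2 * c ≤ ((#(Φ N) : ℝ) * ∑ n ∈ Φ N, ‖g n‖ ^ 2) * c :=
              mul_le_mul_of_nonneg_right hcs hc.le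
          _ = (∑ n ∈ Φ N, ‖g n‖^2) * c^2 := by rw [← hcdef]; ring
      have e3 : (∑ n ∈ Φ N, ‖g n‖^2) / c = (favg Φ N (fun n => g n * cg (g n))).re := by
        have hgg : ∀ n : F, g n * cg (g n) = ((‖g n‖^2 : ℝ) : ℂ) := by
          intro n
          rw [hcg]
          simp only
          rw [Complex.mul_conj]
          norm_cast
          rw [Complex.normSq_eq_norm_sq]
        rw [favg]
        rw [Finset.sum_congr rfl fun n _ => hgg n]
        rw [← Complex.ofReal_sum]
        have hcc : ((#(Φ N) : ℕ) : ℂ) = ((c : ℝ) : ℂ) := by rw [hcdef]; simp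
        rw [hcc, ← Complex.ofReal_div, Complex.ofReal_re]
      have e5 : favg Φ N (fun n => g n * cg (g n)) = ∑ i ∈ range m, ∑ j ∈ range m, T i j N := by
        have hpt : ∀ n : F, g n * cg (g n)
            = ∑ i ∈ range m, ∑ j ∈ range m, f ((i:F) + n) * cg (f ((j:F) + n)) := by
          intro n
          rw [hg, hcg]
          simp only
          rw [map_sum]
          rw [Finset.sum_mul_sum]
        rw [funext hpt]
        rw [favg_sum]
        exact Finset.sum_congr rfl fun i _ => favg_sum _ _ _ _
      have e6 : ∑ i ∈ range m, ∑ j ∈ range m, ‖T i j N‖ ≤ (m:ℝ) + R N := by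
        have hsplit : ∀ i ∈ range m, ∑ j ∈ range m, ‖T i j N‖
            = ‖T i i N‖ + ∑ j ∈ (range m).erase i, ‖T i j N‖ := by
          intro i hi
          exact (Finset.add_sum_erase _ _ hi).symm
        rw [Finset.sum_congr rfl hsplit, Finset.sum_add_distrib]
        have hdiag : ∑ i ∈ range m, ‖T i i N‖ ≤ (m:ℝ) := by
          calc ∑ i ∈ range m, ‖T i i N‖ ≤ ∑ i ∈ range m, 1 := by
                apply Finset.sum_le_sum
                intro i _
                rw [hT]
                apply favg_norm_le
                intro n
                rw [norm_mul, hcg]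
                simp only [RCLike.norm_conj]
                exact mul_le_one₀ (hf _) (norm_nonneg _) (hf _)
            _ = (m:ℝ) := by simp
        rw [hR]
        exact add_le_add hdiag le_rfl
      calc ‖favg Φ N g‖^2 ≤ ((∑ n ∈ Φ N, ‖g n‖) / c)^2 := by
            apply pow_le_pow_left₀ (norm_nonneg _) e1
        _ ≤ (∑ n ∈ Φ N, ‖g n‖^2) / c := e2
        _ = (favg Φ N (fun n => g n * cg (g n))).re := e3
        _ ≤ ‖favg Φ N (fun n => g n * cg (g n))‖ := Complex.re_le_norm _
        _ = ‖∑ i ∈ range m, ∑ j ∈ range m, T i j N‖ := by rw [e5]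
        _ ≤ ∑ i ∈ range m, ∑ j ∈ range m, ‖T i j N‖ := by
            apply (norm_sum_le _ _).trans
            apply Finset.sum_le_sum
            intro i _
            exact norm_sum_le _ _
        _ ≤ (m:ℝ) + R N := e6
    calc ‖B N‖^2 = (1/(m:ℝ))^2 * ‖favg Φ N g‖^2 := by rw [hBn]; ring
      _ ≤ (1/(m:ℝ))^2 * ((m:ℝ) + R N) := by
          apply mul_le_mul_of_nonneg_left key (by positivity)
      _ = 1/(m:ℝ) + R N / (m:ℝ)^2 := by field_simp
  -- assembly
  have hA4 : ∀ᶠ N in atTop, ‖favg Φ N f - B N‖ < ε/4 :=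
    NormedAddCommGroup.tendsto_nhds_zero.mp stepA (ε/4) (by positivity)
  have hR8 : ∀ᶠ N in atTop, R N < (ε^2/8) * (m:ℝ)^2 := by
    have := NormedAddCommGroup.tendsto_nhds_zero.mp hRtend ((ε^2/8) * (m:ℝ)^2) (by positivity)
    filter_upwards [this] with N hN
    exact lt_of_le_of_lt (le_abs_self _) hN
  filter_upwards [hA4, hR8] with N h1 h2
  have hBlt : ‖B N‖ < ε/2 := by
    have : ‖B N‖^2 < (ε/2)^2 := by
      calc ‖B N‖^2 ≤ 1/(m:ℝ) + R N / (m:ℝ)^2 := stepB N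
        _ < ε^2/8 + ε^2/8 := by
            apply add_lt_add hm
            rw [div_lt_iff₀ (by positivity)]
            linarith [h2]
        _ = (ε/2)^2 * 1 := by ring
        _ = (ε/2)^2 := by ring
    exact lt_of_pow_lt_pow_left₀ 2 (by positivity) this
  calc ‖favg Φ N f‖ = ‖(favg Φ N f - B N) + B N‖ := by ring_nf
    _ ≤ ‖favg Φ N f - B N‖ + ‖B N‖ := norm_add_le _ _
    _ < ε/4 + ε/2 := add_lt_add h1 hBlt
    _ < ε := by linarith

lemma monomial_avg {Φ : ℕ → Finset F} (hΦ : IsFolner Φ) :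
    ∀ D : ℕ, ∀ ψ : ℕ → F → ℂ,
      (∀ d a b, ψ d (a + b) = ψ d a * ψ d b) → (∀ d a, ‖ψ d a‖ = 1) →
      1 ≤ D → (∃ t, ψ D t ≠ 1) →
      Tendsto (fun N => favg Φ N (fun n => ∏ d ∈ Finset.Icc 1 D, ψ d (n ^ d))) atTop (nhds 0) := by
  intro D
  induction D with
  | zero => intro ψ hhom hmod hD hnt; omega
  | succ D ih =>
    intro ψ hhom hmod hD hnt
    rcases Nat.eq_zero_or_pos D with hD0 | hD1
    · -- base case D + 1 = 1
      subst hD0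
      have : (fun n : F => ∏ d ∈ Finset.Icc 1 1, ψ d (n ^ d)) = fun n => ψ 1 n := by
        funext n
        rw [Finset.Icc_self, Finset.prod_singleton, pow_one]
      rw [this]
      exact char_avg_tendsto hΦ (ψ 1) (hhom 1) (hmod 1) hnt
    · -- inductive step
      set f : F → ℂ := fun n => ∏ d ∈ Finset.Icc 1 (D+1), ψ d (n ^ d) with hf
      apply vdc hΦ f
      · intro n
        rw [hf]
        simp only
        rw [norm_prod]
        apply le_of_eq
        rw [Finset.prod_congr rfl fun d _ => hmod d (n^d)]
        simp
      intro h hne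
      set φ : ℕ → F → ℂ :=
        fun e t => ∏ d ∈ Finset.Icc (e+1) (D+1), ψ d (t * h^(d-e) * ((d.choose e : ℕ) : F)) with hφ
      have hφhom : ∀ e a b, φ e (a + b) = φ e a * φ e b := by
        intro e a b
        rw [hφ]
        simp only
        rw [← Finset.prod_mul_distrib]
        apply Finset.prod_congr rfl
        intro d _
        rw [← hhom]
        congr 1
        ring
      have hφmod : ∀ e a, ‖φ e a‖ = 1 := by
        intro e a
        rw [hφ]
        simp only
        rw [norm_prod, Finset.prod_congr rfl fun d _ => hmod d _]
        simp
      have hφnt : ∃ t, φ D t ≠ 1 := by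
        obtain ⟨t₀, ht₀⟩ := hnt
        have hcast : (((D+1 : ℕ)) : F) ≠ 0 := Nat.cast_ne_zero.2 (Nat.succ_ne_zero D)
        refine ⟨t₀ / (h * ((D+1 : ℕ) : F)), ?_⟩
        rw [hφ]
        simp only
        rw [Finset.Icc_self, Finset.prod_singleton]
        have h1 : (D+1) - D = 1 := by omega
        have h2 : (D+1).choose D = D + 1 := Nat.choose_succ_self_right D
        rw [h1, h2, pow_one]
        have : t₀ / (h * ((D+1 : ℕ) : F)) * h * (((D+1 : ℕ)) : F) = t₀ := by
          rw [mul_assoc]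
          exact div_mul_cancel₀ t₀ (mul_ne_zero hne hcast)
        rw [this]
        exact ht₀
      -- pointwise identity
      have hpt : ∀ n : F, f (h + n) * (starRingEnd ℂ) (f n)
          = φ 0 1 * ∏ e ∈ Finset.Icc 1 D, φ e (n ^ e) := by
        intro n
        rw [hf]
        simp only
        have hconj : (starRingEnd ℂ) (∏ d ∈ Finset.Icc 1 (D+1), ψ d (n ^ d))
            = ∏ d ∈ Finset.Icc 1 (D+1), ψ d (-(n ^ d)) := by
          rw [map_prod]
          exact Finset.prod_congr rfl fun d _ => char_conj (ψ d) (hhom d) (hmod d) _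
        rw [hconj, ← Finset.prod_mul_distrib]
        have hstep1 : ∀ d ∈ Finset.Icc 1 (D+1),
            ψ d ((h + n)^d) * ψ d (-(n^d))
            = ∏ e ∈ range d, ψ d (n^e * h^(d-e) * ((d.choose e : ℕ) : F)) := by
          intro d hd
          rw [← hhom]
          have hbin : (h + n)^d + -(n^d) = ∑ e ∈ range d, n^e * h^(d-e) * ((d.choose e : ℕ) : F) := by
            have := add_pow n h d
            rw [add_comm h n, this, Finset.sum_range_succ]
            simp [Nat.choose_self]
          rw [hbin]
          exact char_sum (ψ d) (hhom d) (hmod d) _ _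
        rw [Finset.prod_congr rfl hstep1]
        have hswap : ∏ d ∈ Finset.Icc 1 (D+1), ∏ e ∈ range d,
              ψ d (n^e * h^(d-e) * ((d.choose e : ℕ) : F))
            = ∏ e ∈ range (D+1), ∏ d ∈ Finset.Icc (e+1) (D+1),
              ψ d (n^e * h^(d-e) * ((d.choose e : ℕ) : F)) := by
          apply Finset.prod_comm'
          intro d e
          simp only [Finset.mem_Icc, Finset.mem_range]
          omega
        rw [hswap]
        have hins : range (D+1) = insert 0 (Finset.Icc 1 D) := by
          ext x
          simp only [Finset.mem_insert, Finset.mem_Icc, Finset.mem_range]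
          omega
        rw [hins, Finset.prod_insert (by simp)]
        have h0 : ∏ d ∈ Finset.Icc (0+1) (D+1), ψ d (n^(0:ℕ) * h^(d-0) * ((d.choose 0 : ℕ) : F)) = φ 0 1 := by
          rw [hφ]
          apply Finset.prod_congr rfl
          intro d _
          congr 1
          simp
        rw [h0]
      have hmain := ih φ hφhom hφmod hD1 hφnt
      have := hmain.const_mul (φ 0 1)
      rw [mul_zero] at this
      have heqf : (fun N => favg Φ N (fun n => f (h + n) * (starRingEnd ℂ) (f n)))
          = fun N => φ 0 1 * favg Φ N (fun n => ∏ e ∈ Finset.Icc 1 D, φ e (n ^ e)) := by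
        funext N
        rw [← favg_const_mul]
        exact congrArg (favg Φ N) (funext hpt)
      rw [heqf]
      exact this

end

/-- Equidistribution: for characters `χ₁,…,χ_k` of `(F,+)` (F a countable field of
characteristic zero), not all trivial and satisfying no non-trivial multiplicative
relation, and linearly independent polynomials `p₁,…,p_k` vanishing at `0`, the averages
`E_{n∈Φ_N} χ₁(p₁(n))⋯χ_k(p_k(n))` converge to `0` along any Følner sequence. -/
theorem stmt5 {F : Type*} [Field F] [CharZero F] [Countable F] [DecidableEq F]
    (k : ℕ) (χ : Fin k → F → ℂ)
    (hhom : ∀ i a b, χ i (a + b) = χ i a * χ i b) (hmod : ∀ i a, ‖χ i a‖ = 1)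
    (hnontriv : ∃ i g, χ i g ≠ 1)
    (hnorel : ∀ a : Fin k → F, (∀ n, ∏ i, χ i (a i * n) = 1) → a = 0)
    (p : Fin k → Polynomial F) (hli : LinearIndependent F p)
    (hp0 : ∀ i, (p i).eval 0 = 0)
    (Φ : ℕ → Finset F) (hΦ : IsFolner Φ) :
    Tendsto (fun N => (∑ n ∈ Φ N, ∏ i, χ i ((p i).eval n)) / ((Φ N).card : ℂ))
      atTop (nhds 0) := by
  classical
  set M : ℕ := Finset.univ.sup (fun i => (p i).natDegree) with hM
  set ψ : ℕ → F → ℂ := fun d t => ∏ i, χ i ((p i).coeff d * t) with hψ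
  have hψhom : ∀ d a b, ψ d (a + b) = ψ d a * ψ d b := by
    intro d a b
    rw [hψ]
    simp only
    rw [← Finset.prod_mul_distrib]
    apply Finset.prod_congr rfl
    intro i _
    rw [← hhom]
    congr 1
    ring
  have hψmod : ∀ d a, ‖ψ d a‖ = 1 := by
    intro d a
    rw [hψ]
    simp only
    rw [norm_prod, Finset.prod_congr rfl fun i _ => hmod i _]
    simp
  -- pointwise identity
  have hpointwise : ∀ n : F, ∏ i, χ i ((p i).eval n) = ∏ d ∈ Finset.Icc 1 M, ψ d (n ^ d) := by
    intro n
    have hev : ∀ i : Fin k, (p i).eval n = ∑ d ∈ range (M+1), (p i).coeff d * n ^ d := by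
      intro i
      apply Polynomial.eval_eq_sum_range'
      have : (p i).natDegree ≤ M := by
        rw [hM]; exact Finset.le_sup (f := fun i => (p i).natDegree) (Finset.mem_univ i)
      omega
    calc ∏ i, χ i ((p i).eval n)
        = ∏ i, ∏ d ∈ range (M+1), χ i ((p i).coeff d * n ^ d) := by
          apply Finset.prod_congr rfl
          intro i _
          rw [hev i]
          exact char_sum (χ i) (hhom i) (hmod i) _ _
      _ = ∏ d ∈ range (M+1), ψ d (n ^ d) := Finset.prod_comm
      _ = ψ 0 (n ^ 0) * ∏ d ∈ Finset.Icc 1 M, ψ d (n ^ d) := by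
          have hins : range (M+1) = insert 0 (Finset.Icc 1 M) := by
            ext x
            simp only [Finset.mem_insert, Finset.mem_Icc, Finset.mem_range]
            omega
          rw [hins, Finset.prod_insert (by simp)]
      _ = ∏ d ∈ Finset.Icc 1 M, ψ d (n ^ d) := by
          have : ψ 0 (n ^ 0) = 1 := by
            rw [hψ]
            simp only
            have : ∀ i : Fin k, χ i ((p i).coeff 0 * n ^ 0) = 1 := by
              intro i
              have hc0 : (p i).coeff 0 = 0 := by
                rw [Polynomial.coeff_zero_eq_eval_zero, hp0 i]
              rw [hc0, zero_mul]
              exact char_zero' (χ i) (hhom i) (hmod i)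
            rw [Finset.prod_congr rfl fun i _ => this i]
            simp
          rw [this, one_mul]
  -- existence of a nontrivial ψ d with 1 ≤ d ≤ M
  obtain ⟨i₀, g₀, hg₀⟩ := hnontriv
  have hpne : p i₀ ≠ 0 := hli.ne_zero i₀
  set d₀ : ℕ := (p i₀).natDegree with hd₀
  have hd₀1 : 1 ≤ d₀ := by
    rcases Nat.eq_zero_or_pos d₀ with h0 | h1
    · exfalso
      have hnd : (p i₀).natDegree = 0 := by rw [← hd₀]; exact h0
      have hC := Polynomial.eq_C_of_natDegree_eq_zero hnd
      have h00 : (p i₀).coeff 0 = 0 := by rw [Polynomial.coeff_zero_eq_eval_zero, hp0 i₀]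
      exact hpne (by rw [hC, h00, map_zero])
    · exact h1
  have hd₀M : d₀ ≤ M := by
    rw [hM, hd₀]; exact Finset.le_sup (f := fun i => (p i).natDegree) (Finset.mem_univ i₀)
  have hnt₀ : ∃ t, ψ d₀ t ≠ 1 := by
    by_contra hc
    push_neg at hc
    have := hnorel (fun i => (p i).coeff d₀) (fun n => hc n)
    have hzero : (p i₀).coeff d₀ = 0 := congrFun this i₀
    exact (Polynomial.leadingCoeff_ne_zero.2 hpne) hzero
  -- maximal nontrivial degree
  set S : Finset ℕ := (Finset.Icc 1 M).filter (fun d => ∃ t, ψ d t ≠ 1) with hS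
  have hSne : S.Nonempty := ⟨d₀, by simp [hS, Finset.mem_filter, Finset.mem_Icc, hd₀1, hd₀M, hnt₀]⟩
  set D : ℕ := S.max' hSne with hD
  have hDS : D ∈ S := S.max'_mem hSne
  rw [hS, Finset.mem_filter, Finset.mem_Icc] at hDS
  obtain ⟨⟨hD1, hDM⟩, hDnt⟩ := hDS
  have htail : ∀ d ∈ Finset.Icc 1 M, d ∉ Finset.Icc 1 D → ∀ t : F, ψ d t = 1 := by
    intro d hd hnd t
    by_contra hc
    have hdS : d ∈ S := by
      rw [hS, Finset.mem_filter]
      exact ⟨hd, ⟨t, hc⟩⟩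
    have := Finset.le_max' S d hdS
    rw [Finset.mem_Icc] at hd hnd
    omega
  have hsub : Finset.Icc 1 D ⊆ Finset.Icc 1 M := Finset.Icc_subset_Icc_right hDM
  have hprodeq : ∀ n : F, ∏ d ∈ Finset.Icc 1 M, ψ d (n ^ d) = ∏ d ∈ Finset.Icc 1 D, ψ d (n ^ d) :=
    fun n => (Finset.prod_subset hsub (fun d hd hnd => htail d hd hnd (n ^ d))).symm
  have heq : (fun N => (∑ n ∈ Φ N, ∏ i, χ i ((p i).eval n)) / ((Φ N).card : ℂ))
      = fun N => favg Φ N (fun n => ∏ d ∈ Finset.Icc 1 D, ψ d (n ^ d)) := by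
    funext N
    rw [favg]
    congr 1
    apply Finset.sum_congr rfl
    intro n _
    rw [hpointwise n, hprodeq n]
  rw [heq]
  exact monomial_avg hΦ D ψ hψhom hψmod hD1 hDnt
end

section
/- Let R be a countable integral domain, b ∈ R non-zero, r ∈ R, and let (Φ_N) be a Følner sequence in (R,+). Define A_N := {x ∈ R : b·x ∈ Φ_N − r}. If the ideal (b) has finite index in R, then (A_N) is a Følner sequence in (R,+). -/
open Filter Finset

lemma filter_card_le_aux {α : Type*} [DecidableEq α] (S T : Finset α) (p : α → Prop)
    [DecidablePred p] :
    (S.filter p).card ≤ (T.filter p).card + (symmDiff S T).card := by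
  have hsub : S.filter p ⊆ T.filter p ∪ symmDiff S T := by
    intro a ha
    simp only [Finset.mem_filter] at ha
    by_cases h : a ∈ T
    · exact Finset.mem_union_left _ (Finset.mem_filter.mpr ⟨h, ha.2⟩)
    · exact Finset.mem_union_right _ (Finset.mem_symmDiff.mpr (Or.inl ⟨ha.1, h⟩))
  calc (S.filter p).card ≤ _ := Finset.card_le_card hsub
    _ ≤ _ := Finset.card_union_le _ _

set_option maxHeartbeats 1000000 in
/-- Let `R` be a countable integral domain, `b ≠ 0` with the ideal `(b)` of finite
additive index, `r ∈ R`, and `(Φ_N)` a Følner sequence in `(R,+)`. Then the sets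
`A_N = {x : b·x ∈ Φ_N − r}` form a Følner sequence: they are eventually nonempty and
satisfy the Følner condition. -/
theorem stmt8 {R : Type*} [CommRing R] [IsDomain R] [Countable R] [DecidableEq R]
    (b : R) (hb : b ≠ 0) (r : R)
    (hfin : (Submodule.toAddSubgroup (Ideal.span {b})).FiniteIndex)
    (Φ : ℕ → Finset R) (hΦ : IsFolner Φ)
    (A : ℕ → Finset R) (hA : ∀ N, ∀ x : R, x ∈ A N ↔ b * x + r ∈ Φ N) :
    (∀ᶠ N in atTop, (A N).Nonempty) ∧
    ∀ g : R, Tendsto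
      (fun N => ((symmDiff (A N) ((A N).image (fun x => g + x))).card : ℝ) / (A N).card)
      atTop (nhds 0) := by
  classical
  obtain ⟨hne, hlim⟩ := hΦ
  set H : AddSubgroup R := Submodule.toAddSubgroup (Ideal.span {b}) with hHdef
  haveI : AddSubgroup.FiniteIndex H := hfin
  haveI : Finite (R ⧸ H) := AddSubgroup.finite_quotient_of_finiteIndex
  haveI : Fintype (R ⧸ H) := Fintype.ofFinite _
  set π : R →+ R ⧸ H := QuotientAddGroup.mk' H with hπdef
  have hmem : ∀ x : R, x ∈ H ↔ b ∣ x := fun x => Ideal.mem_span_singleton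
  have hπeq : ∀ x y : R, π x = π y ↔ x - y ∈ H := by
    intro x y
    simp only [hπdef, QuotientAddGroup.mk'_apply]
    exact QuotientAddGroup.eq_iff_sub_mem
  set m : ℕ := Fintype.card (R ⧸ H) with hmdef
  have hm : 0 < m := Fintype.card_pos
  -- injective map e x = b*x + r
  set e : R → R := fun x => b * x + r with hedef
  have he : Function.Injective e := by
    intro x y hxy
    simp only [hedef] at hxy
    exact mul_left_cancel₀ hb (add_right_cancel hxy)
  -- cardinal identity : (A N).card = fiber of π r in Φ N
  have hAcard : ∀ N, (A N).image e = (Φ N).filter (fun y => π y = π r) := by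
    intro N
    ext y
    simp only [Finset.mem_image, Finset.mem_filter, hedef]
    constructor
    · rintro ⟨x, hx, rfl⟩
      refine ⟨(hA N x).mp hx, ?_⟩
      rw [hπeq]
      simpa using (hmem (b * x)).mpr (dvd_mul_right b x)
    · rintro ⟨hy, hy2⟩
      rw [hπeq] at hy2
      obtain ⟨x, hx⟩ := (hmem _).mp hy2
      have hxy : b * x + r = y := by linear_combination -hx
      exact ⟨x, (hA N x).mpr (by rwa [hxy]), hxy⟩
  have hAcard' : ∀ N, (A N).card = ((Φ N).filter (fun y => π y = π r)).card := by
    intro N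
    rw [← hAcard N, Finset.card_image_of_injective _ he]
  -- choice of representatives
  set rep : (R ⧸ H) → R := Quotient.out with hrepdef
  have hrep : ∀ q : R ⧸ H, π (rep q) = q := by
    intro q
    simp only [hπdef, hrepdef, QuotientAddGroup.mk'_apply]
    exact Quotient.out_eq' q
  -- key counting inequality
  have key : ∀ N, (Φ N).card ≤ m * (A N).card +
      ∑ q : R ⧸ H, (symmDiff (Φ N) ((Φ N).image (fun x => rep (q - π r) + x))).card := by
    intro N
    have hfib : (Φ N).card = ∑ q : R ⧸ H, ((Φ N).filter (fun y => π y = q)).card :=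
      Finset.card_eq_sum_card_fiberwise (fun x _ => Finset.mem_univ (π x))
    have hper : ∀ q : R ⧸ H, ((Φ N).filter (fun y => π y = q)).card ≤
        (A N).card + (symmDiff (Φ N) ((Φ N).image (fun x => rep (q - π r) + x))).card := by
      intro q
      set g : R := rep (q - π r) with hgdef
      have htrans : (((Φ N).image (fun x => g + x)).filter (fun y => π y = q)).card
          = (A N).card := by
        rw [Finset.filter_image, Finset.card_image_of_injective _ (add_right_injective g),
          hAcard' N]
        congr 1
        apply Finset.filter_congr
        intro x _
        simp only [map_add, hgdef, hrep, eq_iff_iff]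
        constructor
        · intro h
          have h2 : π x - π r = 0 := by
            have h3 : (q - π r + π x) - q = 0 := by rw [h]; abel
            calc π x - π r = (q - π r + π x) - q := by abel
              _ = 0 := h3
          rw [sub_eq_zero] at h2; exact h2
        · intro h
          rw [h]; abel
      calc ((Φ N).filter (fun y => π y = q)).card
          ≤ (((Φ N).image (fun x => g + x)).filter (fun y => π y = q)).card
            + (symmDiff (Φ N) ((Φ N).image (fun x => g + x))).card :=
            filter_card_le_aux _ _ _
        _ = _ := by rw [htrans]
    calc (Φ N).card = ∑ q : R ⧸ H, ((Φ N).filter (fun y => π y = q)).card := hfib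
      _ ≤ ∑ q : R ⧸ H, ((A N).card +
            (symmDiff (Φ N) ((Φ N).image (fun x => rep (q - π r) + x))).card) :=
          Finset.sum_le_sum (fun q _ => hper q)
      _ = m * (A N).card + _ := by
          rw [Finset.sum_add_distrib, Finset.sum_const, Finset.card_univ, smul_eq_mul]
  -- sum of symmDiff ratios tends to zero
  have hsum0 : Tendsto (fun N =>
      (∑ q : R ⧸ H, ((symmDiff (Φ N) ((Φ N).image (fun x => rep (q - π r) + x))).card : ℝ))
        / (Φ N).card) atTop (nhds 0) := by
    have := tendsto_finset_sum (Finset.univ : Finset (R ⧸ H))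
      (fun q _ => hlim (rep (q - π r)))
    simpa only [Finset.sum_const_zero, Finset.sum_div] using this
  -- eventually (Φ N).card ≤ 2*m*(A N).card (in ℝ)
  have hΦpos : ∀ N, (0:ℝ) < (Φ N).card := by
    intro N
    exact_mod_cast Finset.card_pos.mpr (hne N)
  have hev : ∀ᶠ N in atTop, ((Φ N).card : ℝ) ≤ 2 * m * (A N).card := by
    have h12 : ∀ᶠ N in atTop,
        (∑ q : R ⧸ H, ((symmDiff (Φ N) ((Φ N).image (fun x => rep (q - π r) + x))).card : ℝ))
          / (Φ N).card < 1/2 := by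
      have : Set.Iio (1/2 : ℝ) ∈ nhds (0:ℝ) := Iio_mem_nhds (by norm_num)
      exact hsum0.eventually this
    filter_upwards [h12] with N hN
    have hkey : ((Φ N).card : ℝ) ≤ m * (A N).card +
        ∑ q : R ⧸ H, ((symmDiff (Φ N) ((Φ N).image (fun x => rep (q - π r) + x))).card : ℝ) := by
      exact_mod_cast key N
    have hlt : (∑ q : R ⧸ H,
        ((symmDiff (Φ N) ((Φ N).image (fun x => rep (q - π r) + x))).card : ℝ))
        < (1/2) * (Φ N).card := by
      rw [div_lt_iff₀ (hΦpos N)] at hN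
      linarith
    nlinarith [hkey, hlt]
  -- eventual nonemptiness
  have hevne : ∀ᶠ N in atTop, (A N).Nonempty := by
    filter_upwards [hev] with N hN
    rcases Finset.eq_empty_or_nonempty (A N) with h | h
    · exfalso
      rw [h] at hN
      simp only [Finset.card_empty, Nat.cast_zero, mul_zero] at hN
      exact absurd hN (not_le.mpr (hΦpos N))
    · exact h
  refine ⟨hevne, ?_⟩
  intro g
  -- symmDiff bound
  have hsymm : ∀ N, (symmDiff (A N) ((A N).image (fun x => g + x))).card ≤
      (symmDiff (Φ N) ((Φ N).image (fun x => b * g + x))).card := by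
    intro N
    apply Finset.card_le_card_of_injOn e _ (Function.Injective.injOn he)
    intro a ha
    have h1 : a ∈ A N ↔ e a ∈ Φ N := hA N a
    have h2 : a ∈ (A N).image (fun x => g + x) ↔
        e a ∈ (Φ N).image (fun x => b * g + x) := by
      simp only [Finset.mem_image, hedef]
      constructor
      · rintro ⟨x, hx, rfl⟩
        exact ⟨b * x + r, (hA N x).mp hx, by ring⟩
      · rintro ⟨y, hy, hy2⟩
        refine ⟨a - g, (hA N _).mpr ?_, by ring⟩
        have hby : b * (a - g) + r = y := by linear_combination -hy2
        rwa [hby]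
    rw [Finset.mem_coe, Finset.mem_symmDiff] at ha ⊢
    rcases ha with ⟨h3, h4⟩ | ⟨h3, h4⟩
    · exact Or.inl ⟨h1.mp h3, fun hc => h4 (h2.mpr hc)⟩
    · exact Or.inr ⟨h2.mp h3, fun hc => h4 (h1.mpr hc)⟩
  -- squeeze
  apply squeeze_zero' (g := fun N =>
    2 * m * (((symmDiff (Φ N) ((Φ N).image (fun x => b * g + x))).card : ℝ) / (Φ N).card))
  · exact Eventually.of_forall fun N => div_nonneg (Nat.cast_nonneg _) (Nat.cast_nonneg _)
  · filter_upwards [hev, hevne] with N hN hNne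
    have hApos : (0:ℝ) < (A N).card := by
      exact_mod_cast Finset.card_pos.mpr hNne
    rw [mul_div_assoc']
    rw [div_le_div_iff₀ hApos (hΦpos N)]
    have hS : ((symmDiff (A N) ((A N).image (fun x => g + x))).card : ℝ) ≤
        ((symmDiff (Φ N) ((Φ N).image (fun x => b * g + x))).card : ℝ) := by
      exact_mod_cast hsymm N
    calc ((symmDiff (A N) ((A N).image (fun x => g + x))).card : ℝ) * (Φ N).card
        ≤ ((symmDiff (Φ N) ((Φ N).image (fun x => b * g + x))).card : ℝ)
          * (2 * m * (A N).card) :=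
          mul_le_mul hS hN (le_of_lt (hΦpos N)) (Nat.cast_nonneg _)
      _ = 2 * m * ((symmDiff (Φ N) ((Φ N).image (fun x => b * g + x))).card : ℝ)
          * (A N).card := by ring
  · have := (hlim (b * g)).const_mul (2 * m : ℝ)
    simpa using this
end

section
/- Let R be a ring of characteristic zero and suppose an ergodic measure-preserving R-action (T_n)_{n ∈ R} on a probability space (X,μ) admits a non-constant function g : X → S¹ and a character χ : (R,+) → S¹ taking values in a finite set of roots of unity such that T_n g = χ(n) g for all n ∈ R. Then there exists a natural number a ≥ 1 such that χ(a·n) = 1 for all n ∈ R, and consequently for any Følner sequence (Φ_N) in (R,+), lim_N (1/|Φ_N|) ∑_{n ∈ Φ_N} T_{a n} g = g in L²(μ), while ∫_X g dμ = 0; hence the action does not satisfy the joint-ergodicity property (**) for the polynomial p(n) = a·n. -/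
open Filter Finset MeasureTheory

-- a measurable real function, bounded by 1, all of whose sublevel sets have measure 0 or 1,
-- is a.e. constant
lemma ae_const_aux {X : Type*} [MeasurableSpace X] (μ : Measure X) [IsProbabilityMeasure μ]
    (h : X → ℝ) (hm : Measurable h) (hb : ∀ x, |h x| ≤ 1)
    (h01 : ∀ q : ℚ, μ {x | h x < q} = 0 ∨ μ {x | h x < q} = 1) :
    ∃ c : ℝ, h =ᵐ[μ] fun _ => c := by
  set S : Set ℚ := {q | μ {x | h x < (q : ℝ)} = 0} with hS
  have hneg : (-2 : ℚ) ∈ S := by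
    have he : {x | h x < ((-2 : ℚ) : ℝ)} = ∅ := by
      ext x
      simp only [Set.mem_setOf_eq, Set.mem_empty_iff_false, iff_false, not_lt]
      have := (abs_le.mp (hb x)).1
      push_cast
      linarith
    show μ {x | h x < ((-2 : ℚ) : ℝ)} = 0
    rw [he, measure_empty]
  have hub : ∀ q ∈ S, (q : ℝ) ≤ 2 := by
    intro q hq
    by_contra hgt
    push_neg at hgt
    have he : {x | h x < (q : ℝ)} = Set.univ := by
      ext x
      have := (abs_le.mp (hb x)).2
      simp only [Set.mem_setOf_eq, Set.mem_univ, iff_true]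
      linarith
    rw [hS] at hq
    simp only [Set.mem_setOf_eq, he, measure_univ] at hq
    exact one_ne_zero hq
  have hnonempty : ((↑) '' S : Set ℝ).Nonempty := ⟨(-2 : ℚ), ⟨-2, hneg, rfl⟩⟩
  have hbdd : BddAbove ((↑) '' S : Set ℝ) := by
    refine ⟨2, ?_⟩
    rintro r ⟨q, hq, rfl⟩
    exact hub q hq
  set c : ℝ := sSup ((↑) '' S : Set ℝ) with hc
  have h_ge : ∀ᵐ x ∂μ, ∀ q : ℚ, q ∈ S → ¬ (h x < q) := by
    rw [ae_all_iff]
    intro q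
    by_cases hq : q ∈ S
    · refine (ae_iff.2 ?_).mono (fun x hx _ => hx)
      simpa [hS] using hq
    · exact Eventually.of_forall (fun x hqS => absurd hqS hq)
  have h_lt : ∀ᵐ x ∂μ, ∀ q : ℚ, q ∉ S → h x < q := by
    rw [ae_all_iff]
    intro q
    by_cases hq : q ∈ S
    · exact Eventually.of_forall (fun x hqS => absurd hq hqS)
    · have h1 : μ {x | h x < (q : ℝ)} = 1 := (h01 q).resolve_left hq
      have hms : MeasurableSet {x | h x < (q : ℝ)} := measurableSet_lt hm measurable_const
      have h0 : μ ({x | h x < (q : ℝ)}ᶜ) = 0 := by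
        rw [prob_compl_eq_zero_iff hms]
        exact h1
      refine (ae_iff.2 ?_).mono (fun x hx _ => hx)
      simpa [Set.compl_setOf] using h0
  refine ⟨c, ?_⟩
  filter_upwards [h_ge, h_lt] with x h1 h2
  have hle : h x ≤ c := by
    by_contra hgt
    push_neg at hgt
    obtain ⟨q, hq1, hq2⟩ := exists_rat_btwn hgt
    have hqS : q ∉ S := by
      intro hqS
      exact absurd (le_csSup hbdd ⟨q, hqS, rfl⟩) (not_le.mpr hq1)
    exact absurd (h2 q hqS) (not_lt.mpr hq2.le)
  have hge : c ≤ h x := by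
    refine csSup_le hnonempty ?_
    rintro r ⟨q, hq, rfl⟩
    exact not_lt.mp (h1 q hq)
  exact le_antisymm hle hge

/-- If an ergodic action of a characteristic-zero ring `R` admits a non-constant
modulus-one eigenfunction `g` whose eigenvalue character `χ` takes values in a finite set
of roots of unity, then there is `a ≥ 1` with `χ(a·n) = 1` for all `n`, so the averages
`E_{n∈Φ_N} T_{an} g` converge to `g` in `L²(μ)` while `∫ g dμ = 0`; hence (**) fails for
`p(n) = a·n`. -/
theorem stmt12 {R X : Type*} [Ring R] [CharZero R] [Countable R] [DecidableEq R]
    [MeasurableSpace X] (μ : Measure X) [IsProbabilityMeasure μ]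
    (T : R → X → X) (hT : ∀ n, MeasurePreserving (T n) μ μ)
    (hT0 : ∀ x, T 0 x = x) (hTadd : ∀ n m x, T (n + m) x = T n (T m x))
    (herg : ∀ s : Set X, MeasurableSet s → (∀ n, T n ⁻¹' s = s) → μ s = 0 ∨ μ s = 1)
    (g : X → ℂ) (hgm : Measurable g) (hgmod : ∀ x, ‖g x‖ = 1)
    (hgnc : ¬ ∃ c : ℂ, g =ᵐ[μ] fun _ => c)
    (χ : R → ℂ) (hhom : ∀ a b, χ (a + b) = χ a * χ b)
    (hfin : (Set.range χ).Finite) (hru : ∀ n, ∃ m : ℕ, 1 ≤ m ∧ χ n ^ m = 1)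
    (heig : ∀ n, (fun x => g (T n x)) =ᵐ[μ] fun x => χ n * g x) :
    ∃ a : ℕ, 1 ≤ a ∧ (∀ n : R, χ ((a : R) * n) = 1) ∧
      (∫ x, g x ∂μ = 0) ∧
      ∀ Φ : ℕ → Finset R, IsFolner Φ →
        Tendsto (fun N => ∫ x,
            ‖(∑ n ∈ Φ N, g (T ((a : R) * n) x)) / ((Φ N).card : ℂ) - g x‖ ^ 2 ∂μ)
          atTop (nhds 0) := by
  classical
  -- χ 0 = 1
  have hχ0 : χ 0 = 1 := by
    have h2 : χ 0 = χ 0 * χ 0 := by simpa using hhom 0 0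
    obtain ⟨m, hm1, hm2⟩ := hru 0
    have hne : χ 0 ≠ 0 := fun h => by
      simp [h, zero_pow (Nat.one_le_iff_ne_zero.mp hm1)] at hm2
    have h3 : χ 0 * 1 = χ 0 * χ 0 := by rw [mul_one, ← h2]
    exact (mul_left_cancel₀ hne h3).symm
  -- χ (k • n) = χ n ^ k
  have hpow : ∀ (k : ℕ) (n : R), χ ((k : R) * n) = χ n ^ k := by
    intro k n
    induction k with
    | zero => simpa using hχ0
    | succ k ih =>
      have : ((k + 1 : ℕ) : R) * n = (k : R) * n + n := by
        push_cast
        rw [add_mul, one_mul]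
      rw [this, hhom, ih, pow_succ]
  -- choose the exponent a
  set e : ℂ → ℕ := fun z => if hz : ∃ m : ℕ, 1 ≤ m ∧ z ^ m = 1 then hz.choose else 1 with he
  have he1 : ∀ z, 1 ≤ e z := by
    intro z
    by_cases hz : ∃ m : ℕ, 1 ≤ m ∧ z ^ m = 1
    · simp only [he, dif_pos hz]; exact hz.choose_spec.1
    · simp [he, dif_neg hz]
  have he2 : ∀ n : R, χ n ^ (e (χ n)) = 1 := by
    intro n
    have hz : ∃ m : ℕ, 1 ≤ m ∧ χ n ^ m = 1 := hru n
    simp only [he, dif_pos hz]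
    exact hz.choose_spec.2
  set F := hfin.toFinset with hF
  set a : ℕ := ∏ z ∈ F, e z with ha
  have ha1 : 1 ≤ a := Finset.one_le_prod' (fun z _ => he1 z)
  have hχa : ∀ n : R, χ ((a : R) * n) = 1 := by
    intro n
    rw [hpow]
    have hmem : χ n ∈ F := hfin.mem_toFinset.mpr ⟨n, rfl⟩
    obtain ⟨k, hk⟩ := Finset.dvd_prod_of_mem e hmem
    rw [← ha] at hk
    rw [hk, pow_mul, he2 n, one_pow]
  -- zero-one law for a.e.-invariant sets
  have zeroone : ∀ s : Set X, MeasurableSet s → (∀ n, T n ⁻¹' s =ᵐ[μ] s) →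
      μ s = 0 ∨ μ s = 1 := by
    intro s hsm hinv
    set s' : Set X := ⋂ n, T n ⁻¹' s with hs'
    have hs'm : MeasurableSet s' :=
      MeasurableSet.iInter (fun n => hsm.preimage (hT n).measurable)
    have hs'inv : ∀ m, T m ⁻¹' s' = s' := by
      intro m
      ext x
      simp only [hs', Set.mem_iInter, Set.mem_preimage]
      constructor
      · intro hx k
        have := hx (k - m)
        rwa [← hTadd, sub_add_cancel] at this
      · intro hx n
        have := hx (n + m)
        rwa [hTadd] at this
    have hsub : s' ⊆ s := fun x hx => by
      have := Set.mem_iInter.mp hx 0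
      rwa [Set.mem_preimage, hT0] at this
    have hnull : μ (s \ s') = 0 := by
      have hsub2 : s \ s' ⊆ ⋃ n, s \ T n ⁻¹' s := by
        intro x ⟨hxs, hxs'⟩
        simp only [hs', Set.mem_iInter, not_forall] at hxs'
        obtain ⟨n, hn⟩ := hxs'
        exact Set.mem_iUnion.mpr ⟨n, hxs, hn⟩
      refine measure_mono_null hsub2 (measure_iUnion_null fun n => ?_)
      exact (ae_eq_set.mp (hinv n)).2
    have heq : μ s = μ s' := by
      refine le_antisymm ?_ (measure_mono hsub)
      calc μ s ≤ μ (s' ∪ (s \ s')) := measure_mono (fun x hx => by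
            by_cases hx' : x ∈ s' <;> simp [hx, hx'])
        _ ≤ μ s' + μ (s \ s') := measure_union_le _ _
        _ = μ s' := by rw [hnull, add_zero]
    rw [heq]
    exact herg s' hs'm hs'inv
  -- there is n₀ with χ n₀ ≠ 1
  have hnontriv : ∃ n₀ : R, χ n₀ ≠ 1 := by
    by_contra hall
    push_neg at hall
    have hginv : ∀ n, (fun x => g (T n x)) =ᵐ[μ] g := by
      intro n
      refine (heig n).trans (Eventually.of_forall fun x => ?_)
      simp [hall n]
    -- real and imaginary parts are a.e. constant
    have key : ∀ h : X → ℝ, Measurable h → (∀ x, |h x| ≤ 1) →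
        (∀ n, (fun x => h (T n x)) =ᵐ[μ] h) → ∃ c : ℝ, h =ᵐ[μ] fun _ => c := by
      intro h hm hb hinv
      refine ae_const_aux μ h hm hb (fun q => ?_)
      refine zeroone _ (measurableSet_lt hm measurable_const) (fun n => ?_)
      filter_upwards [hinv n] with x hx
      change (h (T n x) < (q : ℝ)) = (h x < (q : ℝ))
      rw [hx]
    have hre : ∃ c : ℝ, (fun x => (g x).re) =ᵐ[μ] fun _ => c := by
      refine key _ (Complex.measurable_re.comp hgm) (fun x => ?_) (fun n => ?_)
      · calc |(g x).re| ≤ ‖g x‖ := Complex.abs_re_le_norm _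
          _ = 1 := hgmod x
      · filter_upwards [hginv n] with x hx; simp [hx]
    have him : ∃ c : ℝ, (fun x => (g x).im) =ᵐ[μ] fun _ => c := by
      refine key _ (Complex.measurable_im.comp hgm) (fun x => ?_) (fun n => ?_)
      · calc |(g x).im| ≤ ‖g x‖ := Complex.abs_im_le_norm _
          _ = 1 := hgmod x
      · filter_upwards [hginv n] with x hx; simp [hx]
    obtain ⟨c1, hc1⟩ := hre
    obtain ⟨c2, hc2⟩ := him
    refine hgnc ⟨⟨c1, c2⟩, ?_⟩
    filter_upwards [hc1, hc2] with x h1 h2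
    exact Complex.ext h1 h2
  obtain ⟨n₀, hn₀⟩ := hnontriv
  -- integral of g is zero
  have hint : ∫ x, g x ∂μ = 0 := by
    have h1 : ∫ x, g (T n₀ x) ∂μ = ∫ x, g x ∂μ := by
      rw [← integral_map (hT n₀).measurable.aemeasurable hgm.aestronglyMeasurable,
        (hT n₀).map_eq]
    have h2 : ∫ x, g (T n₀ x) ∂μ = χ n₀ * ∫ x, g x ∂μ := by
      rw [integral_congr_ae (heig n₀)]
      simpa using integral_smul (χ n₀) g (μ := μ)
    have h3 : (χ n₀ - 1) * ∫ x, g x ∂μ = 0 := by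
      rw [sub_mul, one_mul, ← h2, h1, sub_self]
    rcases mul_eq_zero.mp h3 with h | h
    · exact absurd (sub_eq_zero.mp h) hn₀
    · exact h
  refine ⟨a, ha1, hχa, hint, ?_⟩
  intro Φ hΦ
  have hzero : ∀ N, (∫ x, ‖(∑ n ∈ Φ N, g (T ((a : R) * n) x)) / ((Φ N).card : ℂ) - g x‖ ^ 2 ∂μ)
      = 0 := by
    intro N
    have hae : ∀ᵐ x ∂μ, ∀ n ∈ (↑(Φ N) : Set R), g (T ((a : R) * n) x) = g x := by
      rw [ae_ball_iff (Φ N).countable_toSet]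
      intro n _
      filter_upwards [heig ((a : R) * n)] with x hx
      rw [hx, hχa n, one_mul]
    have hcard : ((Φ N).card : ℂ) ≠ 0 := by
      exact_mod_cast Nat.cast_ne_zero.mpr (Finset.card_ne_zero_of_mem ((hΦ.1 N).choose_spec))
    have : (fun x => ‖(∑ n ∈ Φ N, g (T ((a : R) * n) x)) / ((Φ N).card : ℂ) - g x‖ ^ 2)
        =ᵐ[μ] fun _ => (0 : ℝ) := by
      filter_upwards [hae] with x hx
      have hsum : (∑ n ∈ Φ N, g (T ((a : R) * n) x)) = ((Φ N).card : ℂ) * g x := by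
        rw [Finset.sum_congr rfl (fun n hn => hx n (Finset.mem_coe.mpr hn)), Finset.sum_const, nsmul_eq_mul]
      rw [hsum, mul_comm, mul_div_assoc, div_self hcard, mul_one, sub_self, norm_zero]
      norm_num
    rw [integral_congr_ae this, integral_zero]
    
  have : (fun N => ∫ x, ‖(∑ n ∈ Φ N, g (T ((a : R) * n) x)) / ((Φ N).card : ℂ) - g x‖ ^ 2 ∂μ)
      = fun _ => (0 : ℝ) := funext hzero
  rw [this]
  exact tendsto_const_nhds
end
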